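/- arXiv:0707.0704 — 7 statements merged into one kernel-verified Lean document; each statement's English description precedes it below -/
import Mathlib

section
/- For any symmetric matrix X with a I ⪯ X ⪯ b I where 0 < a < b, and any symmetric matrix H, trace(X^{-1} H X^{-1} H) ≥ b^{-2} ‖H‖_F^2. -/
open Matrix

theorem eig_lb (p : ℕ) (X : Matrix (Fin p) (Fin p) ℝ) (hX : X.IsHermitian) (a : ℝ)
    (hXa : (X - a • (1 : Matrix (Fin p) (Fin p) ℝ)).PosSemidef) (i : Fin p) :
    a ≤ hX.eigenvalues i := by
  have h := hXa.dotProduct_mulVec_nonneg (⇑(hX.eigenvectorBasis i))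
  have hmv : (X - a • (1 : Matrix (Fin p) (Fin p) ℝ)) *ᵥ ⇑(hX.eigenvectorBasis i)
      = (hX.eigenvalues i - a) • ⇑(hX.eigenvectorBasis i) := by
    rw [sub_mulVec, hX.mulVec_eigenvectorBasis, smul_mulVec, one_mulVec, sub_smul]
  have hnorm : star ⇑(hX.eigenvectorBasis i) ⬝ᵥ ⇑(hX.eigenvectorBasis i) = 1 := by
    have h1 : inner ℝ (hX.eigenvectorBasis i) (hX.eigenvectorBasis i) = (1 : ℝ) := by
      rw [real_inner_self_eq_norm_sq, hX.eigenvectorBasis.orthonormal.1 i]; norm_num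
    exact h1
  rw [hmv, dotProduct_smul, hnorm] at h
  simpa using h

theorem eig_ub (p : ℕ) (X : Matrix (Fin p) (Fin p) ℝ) (hX : X.IsHermitian) (b : ℝ)
    (hXb : ((b • (1 : Matrix (Fin p) (Fin p) ℝ)) - X).PosSemidef) (i : Fin p) :
    hX.eigenvalues i ≤ b := by
  have h := hXb.dotProduct_mulVec_nonneg (⇑(hX.eigenvectorBasis i))
  have hmv : ((b • (1 : Matrix (Fin p) (Fin p) ℝ)) - X) *ᵥ ⇑(hX.eigenvectorBasis i)
      = (b - hX.eigenvalues i) • ⇑(hX.eigenvectorBasis i) := by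
    rw [sub_mulVec, hX.mulVec_eigenvectorBasis, smul_mulVec, one_mulVec, sub_smul]
  have hnorm : star ⇑(hX.eigenvectorBasis i) ⬝ᵥ ⇑(hX.eigenvectorBasis i) = 1 := by
    have h1 : inner ℝ (hX.eigenvectorBasis i) (hX.eigenvectorBasis i) = (1 : ℝ) := by
      rw [real_inner_self_eq_norm_sq, hX.eigenvectorBasis.orthonormal.1 i]; norm_num
    exact h1
  rw [hmv, dotProduct_smul, hnorm] at h
  simpa using h

theorem trace_mul_eq_sum (p : ℕ) (M N : Matrix (Fin p) (Fin p) ℝ) :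
    (M * N).trace = ∑ i, ∑ j, M i j * N j i := by
  simp [Matrix.trace, Matrix.diag, Matrix.mul_apply]

theorem trace_inv_H_inv_H_ge (p : ℕ) (X H : Matrix (Fin p) (Fin p) ℝ)
    (hX : X.IsHermitian) (hH : H.IsHermitian) (a b : ℝ) (ha : 0 < a) (hab : a < b)
    (hXa : (X - a • (1 : Matrix (Fin p) (Fin p) ℝ)).PosSemidef)
    (hXb : ((b • (1 : Matrix (Fin p) (Fin p) ℝ)) - X).PosSemidef) :
    (X⁻¹ * H * X⁻¹ * H).trace ≥ b⁻¹ ^ 2 * ∑ i, ∑ j, (H i j) ^ 2 := by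
  have hla : ∀ i, a ≤ hX.eigenvalues i := eig_lb p X hX a hXa
  have hlb : ∀ i, hX.eigenvalues i ≤ b := eig_ub p X hX b hXb
  set l := hX.eigenvalues with hl
  have hlpos : ∀ i, 0 < l i := fun i => lt_of_lt_of_le ha (hla i)
  have hb : (0:ℝ) < b := ha.trans hab
  set U : Matrix (Fin p) (Fin p) ℝ := (hX.eigenvectorUnitary : Matrix (Fin p) (Fin p) ℝ) with hUdef
  have hU1 : U * star U = 1 := (Matrix.mem_unitaryGroup_iff).mp hX.eigenvectorUnitary.2
  have hU2 : star U * U = 1 := (Matrix.mem_unitaryGroup_iff').mp hX.eigenvectorUnitary.2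
  have hspec : X = U * diagonal l * star U := by
    have := hX.spectral_theorem
    simpa using this
  set D' : Matrix (Fin p) (Fin p) ℝ := diagonal (fun i => (l i)⁻¹) with hD'
  have hdiag : D' * diagonal l = 1 := by
    rw [hD', diagonal_mul_diagonal]
    have : (fun i => (l i)⁻¹ * l i) = fun _ => (1:ℝ) := by
      funext i; exact inv_mul_cancel₀ (hlpos i).ne'
    rw [this, diagonal_one]
  have hinv : X⁻¹ = U * D' * star U := by
    apply Matrix.inv_eq_left_inv
    rw [hspec]
    simp only [Matrix.mul_assoc]
    rw [show star U * (U * (diagonal l * star U)) = diagonal l * star U by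
      rw [← Matrix.mul_assoc, hU2, Matrix.one_mul]]
    rw [← Matrix.mul_assoc D', hdiag, Matrix.one_mul, hU1]
  set K : Matrix (Fin p) (Fin p) ℝ := star U * H * U with hK
  have hKH : K.IsHermitian := by
    rw [hK, Matrix.star_eq_conjTranspose]
    exact Matrix.isHermitian_conjTranspose_mul_mul U hH
  have hKsymm : ∀ i j, K j i = K i j := fun i j => by
    conv_lhs => rw [← hKH.eq]
    rfl
  -- trace identity
  have htr : (X⁻¹ * H * X⁻¹ * H).trace = (D' * K * (D' * K)).trace := by
    rw [hinv]
    have h1 : U * D' * star U * H * (U * D' * star U) * H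
        = U * (D' * K * (D' * K)) * star U := by
      rw [hK]
      simp only [Matrix.mul_assoc]
      rw [hU1, Matrix.mul_one]
    rw [h1, Matrix.trace_mul_cycle, ← Matrix.mul_assoc, hU2, Matrix.one_mul]
  have htrsum : (D' * K * (D' * K)).trace
      = ∑ i, ∑ j, (l i)⁻¹ * (l j)⁻¹ * (K i j)^2 := by
    rw [trace_mul_eq_sum]
    apply Finset.sum_congr rfl; intro i _
    apply Finset.sum_congr rfl; intro j _
    rw [hD']
    simp [Matrix.diagonal_mul, hKsymm i j]
    ring
  -- norms equal
  have hKnorm : ∑ i, ∑ j, (K i j)^2 = ∑ i, ∑ j, (H i j)^2 := by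
    have h2 : (K * K).trace = (H * H).trace := by
      have : K * K = star U * (H * H) * U := by
        rw [hK]
        calc star U * H * U * (star U * H * U)
            = star U * H * (U * star U) * H * U := by simp only [Matrix.mul_assoc]
          _ = star U * (H * H) * U := by rw [hU1]; simp only [Matrix.mul_assoc, Matrix.mul_one]
      rw [this, Matrix.trace_mul_cycle, ← Matrix.mul_assoc, hU1, Matrix.one_mul]
    rw [trace_mul_eq_sum, trace_mul_eq_sum] at h2
    calc ∑ i, ∑ j, (K i j)^2 = ∑ i, ∑ j, K i j * K j i := by
          apply Finset.sum_congr rfl; intro i _; apply Finset.sum_congr rfl; intro j _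
          rw [hKsymm i j, sq]
      _ = ∑ i, ∑ j, H i j * H j i := h2
      _ = ∑ i, ∑ j, (H i j)^2 := by
          apply Finset.sum_congr rfl; intro i _; apply Finset.sum_congr rfl; intro j _
          have hHs : H j i = H i j := by
            conv_lhs => rw [← hH.eq]
            rfl
          rw [hHs, sq]
  rw [htr, htrsum, ge_iff_le, ← hKnorm, Finset.mul_sum]
  apply Finset.sum_le_sum; intro i _
  rw [Finset.mul_sum]
  apply Finset.sum_le_sum; intro j _
  have hsq : (0:ℝ) ≤ (K i j)^2 := sq_nonneg _
  have h1 : b⁻¹ ≤ (l i)⁻¹ := inv_anti₀ (hlpos i) (hlb i)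
  have h2 : b⁻¹ ≤ (l j)⁻¹ := inv_anti₀ (hlpos j) (hlb j)
  have hbinv : (0:ℝ) ≤ b⁻¹ := by positivity
  calc b⁻¹^2 * (K i j)^2 = (b⁻¹ * b⁻¹) * (K i j)^2 := by ring
    _ ≤ ((l i)⁻¹ * (l j)⁻¹) * (K i j)^2 := by
        apply mul_le_mul_of_nonneg_right _ hsq
        exact mul_le_mul h1 h2 hbinv (le_of_lt (inv_pos.mpr (hlpos i)))
end

section
/- Suppose X is symmetric positive definite and satisfies trace(SX) + λ‖X‖_1 = p, where S ⪰ 0, λ > 0, and ‖X‖_1 is the entrywise ℓ1 norm. Then the maximum eigenvalue of X is at most p/λ. -/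
open Matrix

lemma psd_diag_nonneg {n : ℕ} {M : Matrix (Fin n) (Fin n) ℝ} (hM : M.PosSemidef) (i : Fin n) :
    0 ≤ M i i := by
  exact hM.diag_nonneg

lemma psd_trace_nonneg {n : ℕ} {M : Matrix (Fin n) (Fin n) ℝ} (hM : M.PosSemidef) :
    0 ≤ M.trace := by
  exact Finset.sum_nonneg fun i _ => psd_diag_nonneg hM i

lemma trace_eq_sum_eigs {n : ℕ} {M : Matrix (Fin n) (Fin n) ℝ} (hM : M.IsHermitian) :
    M.trace = ∑ i, hM.eigenvalues i := by
  have h := hM.spectral_theorem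
  have hu : (star hM.eigenvectorUnitary.1) * hM.eigenvectorUnitary.1 = 1 := by
    simpa using congrArg Subtype.val (unitary.star_mul_self hM.eigenvectorUnitary)
  conv_lhs => rw [h]
  rw [← h]
  simpa using hM.trace_eq_sum_eigenvalues

theorem eigenvalue_bound_of_zero_gap (p : ℕ) (S X : Matrix (Fin p) (Fin p) ℝ)
    (hS : S.PosSemidef) (hX : X.PosDef) (lam : ℝ) (hlam : 0 < lam)
    (hgap : (S * X).trace + lam * ∑ i, ∑ j, |X i j| = p) :
    ∀ i, hX.1.eigenvalues i ≤ p / lam := by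
  intro i
  -- trace(S X) ≥ 0
  have hXpsd := hX.posSemidef
  open scoped MatrixOrder in set Y := CFC.sqrt X with hY
  have hYpsd : Y.PosSemidef := by open scoped MatrixOrder in exact (CFC.sqrt_nonneg X).posSemidef
  have htr : (S * X).trace = (Yᴴ * S * Y).trace := by
    rw [hYpsd.1]
    calc (S * X).trace = (S * (Y * Y)).trace := by open scoped MatrixOrder in rw [hY, CFC.sqrt_mul_sqrt_self X hXpsd.nonneg]
      _ = (Y * S * Y).trace := by rw [← Matrix.mul_assoc, Matrix.trace_mul_cycle]
  have hSX : 0 ≤ (S * X).trace := by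
    rw [htr]
    exact psd_trace_nonneg (hS.conjTranspose_mul_mul_same Y)
  -- λ ‖X‖₁ ≤ p
  have h1 : lam * ∑ i, ∑ j, |X i j| ≤ p := by linarith
  -- eigenvalue ≤ trace X
  have hpos : ∀ j, 0 < hX.1.eigenvalues j := hX.eigenvalues_pos
  have hle : hX.1.eigenvalues i ≤ ∑ j, hX.1.eigenvalues j :=
    Finset.single_le_sum (fun j _ => (hpos j).le) (Finset.mem_univ i)
  have htrX : X.trace = ∑ j, hX.1.eigenvalues j := trace_eq_sum_eigs hX.1
  -- trace X ≤ ‖X‖₁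
  have h2 : X.trace ≤ ∑ i, ∑ j, |X i j| := by
    rw [Matrix.trace]
    apply Finset.sum_le_sum
    intro k _
    calc X.diag k ≤ |X k k| := le_abs_self _
      _ ≤ ∑ j, |X k j| := Finset.single_le_sum (f := fun j => |X k j|) (fun j _ => abs_nonneg _) (Finset.mem_univ k)
  rw [le_div_iff₀ hlam]
  have : lam * hX.1.eigenvalues i ≤ lam * ∑ i, ∑ j, |X i j| := by
    apply mul_le_mul_of_nonneg_left _ hlam.le
    calc hX.1.eigenvalues i ≤ ∑ j, hX.1.eigenvalues j := hle
      _ = X.trace := htrX.symm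
      _ ≤ _ := h2
  linarith
end

section
/- The problem min_y { y^T Q^{-1} y : ‖y - s‖_∞ ≤ λ } and the problem min_x { x^T Q x - 2 s^T x + 2λ‖x‖_1 } are dual to each other with zero duality gap; in particular the optimal values satisfy strong duality, with the relation y = Q x at optimality. -/
open Matrix

lemma aux_lin_nonneg (c q δ : ℝ) (hδ : 0 < δ)
    (h : ∀ t : ℝ, 0 < t → t < δ → 0 ≤ c * t + q * t ^ 2) : 0 ≤ c := by
  by_contra hc
  push_neg at hc
  have hq1 : (0:ℝ) < |q| + 1 := by positivity
  set t := min (δ/2) (-c/(2*(|q|+1))) with ht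
  have ht0 : 0 < t := lt_min (by linarith) (div_pos (by linarith) (by positivity))
  have htδ : t < δ := lt_of_le_of_lt (min_le_left _ _) (by linarith)
  have h1 := h t ht0 htδ
  have h2 : t ≤ -c/(2*(|q|+1)) := min_le_right _ _
  have h4 : t * (2*(|q|+1)) ≤ -c := (le_div_iff₀ (by positivity)).mp h2
  have h3 : q * t ≤ (|q|+1) * t :=
    mul_le_mul_of_nonneg_right (by cases abs_cases q <;> linarith) ht0.le
  nlinarith [mul_le_mul_of_nonneg_right h3 ht0.le, mul_pos ht0 ht0]

lemma dot_symm {n : ℕ} (M : Matrix (Fin n) (Fin n) ℝ) (hM : M.IsHermitian)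
    (v w : Fin n → ℝ) : v ⬝ᵥ M *ᵥ w = w ⬝ᵥ M *ᵥ v := by
  have hMt : Mᵀ = M := by
    have := hM.eq; rwa [conjTranspose_eq_transpose_of_trivial] at this
  rw [dotProduct_mulVec, ← mulVec_transpose, hMt, dotProduct_comm]

lemma sum_abs_update {n : ℕ} (x : Fin n → ℝ) (i : Fin n) (t : ℝ) :
    ∑ j, |(x + (Pi.single i t : Fin n → ℝ)) j| = (∑ j, |x j|) - |x i| + |x i + t| := by
  have h1 : ∀ j, |(x + (Pi.single i t : Fin n → ℝ)) j| = Function.update (fun k => |x k|) i (|x i + t|) j := by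
    intro j
    by_cases h : j = i
    · subst h; simp
    · simp [Pi.single_apply, Function.update_apply, h]
  rw [Finset.sum_congr rfl (fun j _ => h1 j), Finset.sum_update_of_mem (Finset.mem_univ i),
    ← Finset.erase_eq, ← Finset.add_sum_erase _ (fun k => |x k|) (Finset.mem_univ i)]
  ring

lemma expandF {n : ℕ} (Q : Matrix (Fin n) (Fin n) ℝ) (hQt : Qᵀ = Q)
    (s : Fin n → ℝ) (lam : ℝ) (x : Fin n → ℝ) (i : Fin n) (t : ℝ) :
    (x + (Pi.single i t : Fin n → ℝ)) ⬝ᵥ Q *ᵥ (x + (Pi.single i t : Fin n → ℝ)) - 2*(s ⬝ᵥ (x + (Pi.single i t : Fin n → ℝ)))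
      + 2*lam*∑ j, |(x + (Pi.single i t : Fin n → ℝ)) j|
    = (x ⬝ᵥ Q *ᵥ x - 2*(s ⬝ᵥ x) + 2*lam*∑ j, |x j|)
      + 2*((Q *ᵥ x) i - s i)*t + Q i i * t^2
      + 2*lam*(|x i + t| - |x i|) := by
  have hsym : ∀ a b, Q a b = Q b a := fun a b => by
    conv_lhs => rw [← hQt, transpose_apply]
  have h1 : x ⬝ᵥ Q *ᵥ (Pi.single i t : Fin n → ℝ) = ((Q *ᵥ x) i) * t := by
    rw [mulVec_single]
    simp only [dotProduct, mulVec]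
    rw [Finset.sum_mul]
    exact Finset.sum_congr rfl fun j _ => by rw [hsym i j]; simp only [Pi.smul_apply, col_apply, op_smul_eq_mul]; ring
  have h2 : (Pi.single i t : Fin n → ℝ) ⬝ᵥ Q *ᵥ x = t * (Q *ᵥ x) i := single_dotProduct _ _ _
  have h3 : (Pi.single i t : Fin n → ℝ) ⬝ᵥ Q *ᵥ (Pi.single i t : Fin n → ℝ) = Q i i * t^2 := by
    rw [mulVec_single, single_dotProduct]; simp only [Pi.smul_apply, col_apply, op_smul_eq_mul]; ring
  have h4 : s ⬝ᵥ (x + (Pi.single i t : Fin n → ℝ)) = s ⬝ᵥ x + s i * t := by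
    rw [dotProduct_add, dotProduct_single]
  rw [add_dotProduct, mulVec_add, dotProduct_add, dotProduct_add, h1, h2, h3, h4,
    sum_abs_update]
  ring

lemma coord_opt {n : ℕ} (Q : Matrix (Fin n) (Fin n) ℝ) (hQt : Qᵀ = Q)
    (s : Fin n → ℝ) (lam : ℝ) (hlam : 0 < lam) (x : Fin n → ℝ)
    (hmin : ∀ x' : Fin n → ℝ,
      x ⬝ᵥ Q *ᵥ x - 2*(s ⬝ᵥ x) + 2*lam*∑ j, |x j| ≤
        x' ⬝ᵥ Q *ᵥ x' - 2*(s ⬝ᵥ x') + 2*lam*∑ j, |x' j|)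
    (i : Fin n) :
    |(Q *ᵥ x) i - s i| ≤ lam ∧ ((Q *ᵥ x) i - s i) * x i = -(lam * |x i|) := by
  set a := (Q *ᵥ x) i - s i with ha
  have key : ∀ t : ℝ, 0 ≤ 2*a*t + Q i i * t^2 + 2*lam*(|x i + t| - |x i|) := by
    intro t
    have h := hmin (x + (Pi.single i t : Fin n → ℝ))
    rw [expandF Q hQt s lam x i t] at h
    rw [← ha] at h
    linarith
  rcases lt_trichotomy (x i) 0 with hxi | hxi | hxi
  · -- x i < 0 : a = lam
    have h1 : 0 ≤ 2*a - 2*lam := by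
      apply aux_lin_nonneg _ (Q i i) (-(x i)) (by linarith)
      intro t ht0 htδ
      have h := key t
      rw [abs_of_neg (by linarith : x i + t < 0), abs_of_neg hxi] at h
      nlinarith
    have h2 : 0 ≤ 2*lam - 2*a := by
      apply aux_lin_nonneg _ (Q i i) (-(x i)) (by linarith)
      intro t ht0 htδ
      have h := key (-t)
      rw [abs_of_neg (by linarith : x i + -t < 0), abs_of_neg hxi] at h
      nlinarith
    have haeq : a = lam := by linarith
    refine ⟨by rw [haeq, abs_of_pos hlam], ?_⟩
    rw [haeq, abs_of_neg hxi]; ring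
  · -- x i = 0
    have h1 : 0 ≤ 2*a + 2*lam := by
      apply aux_lin_nonneg _ (Q i i) 1 one_pos
      intro t ht0 htδ
      have h := key t
      rw [hxi] at h
      simp only [zero_add, abs_zero, sub_zero] at h
      rw [abs_of_pos ht0] at h
      nlinarith
    have h2 : 0 ≤ 2*lam - 2*a := by
      apply aux_lin_nonneg _ (Q i i) 1 one_pos
      intro t ht0 htδ
      have h := key (-t)
      rw [hxi] at h
      simp only [zero_add, abs_zero, sub_zero, abs_neg] at h
      rw [abs_of_pos ht0] at h
      nlinarith
    refine ⟨abs_le.mpr ⟨by linarith, by linarith⟩, by rw [hxi]; simp⟩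
  · -- x i > 0 : a = -lam
    have h1 : 0 ≤ 2*a + 2*lam := by
      apply aux_lin_nonneg _ (Q i i) (x i) hxi
      intro t ht0 htδ
      have h := key t
      rw [abs_of_pos (by linarith : 0 < x i + t), abs_of_pos hxi] at h
      nlinarith
    have h2 : 0 ≤ -(2*a) - 2*lam := by
      apply aux_lin_nonneg _ (Q i i) (x i) hxi
      intro t ht0 htδ
      have h := key (-t)
      rw [abs_of_pos (by linarith : 0 < x i + -t), abs_of_pos hxi] at h
      nlinarith
    have haeq : a = -lam := by linarith
    refine ⟨by rw [haeq, abs_neg, abs_of_pos hlam], ?_⟩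
    rw [haeq, abs_of_pos hxi]; ring

lemma exists_min {n : ℕ} (Q : Matrix (Fin n) (Fin n) ℝ) (hQ : Q.PosDef)
    (s : Fin n → ℝ) (lam : ℝ) (hlam : 0 < lam) :
    ∃ x : Fin n → ℝ, ∀ x' : Fin n → ℝ,
      x ⬝ᵥ Q *ᵥ x - 2*(s ⬝ᵥ x) + 2*lam*∑ j, |x j| ≤
        x' ⬝ᵥ Q *ᵥ x' - 2*(s ⬝ᵥ x') + 2*lam*∑ j, |x' j| := by
  rcases Nat.eq_zero_or_pos n with hn | hn
  · subst hn
    refine ⟨0, fun x' => ?_⟩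
    have hx' : x' = 0 := funext fun i => i.elim0
    rw [hx']
  · set E := EuclideanSpace ℝ (Fin n) with hE
    set F : E → ℝ := fun v => v ⬝ᵥ Q *ᵥ v - 2*(s ⬝ᵥ v) + 2*lam*∑ j, |v j| with hFdef
    have hFpi : Continuous (fun v : Fin n → ℝ => v ⬝ᵥ Q *ᵥ v - 2*(s ⬝ᵥ v) + 2*lam*∑ j, |v j|) := by
      simp only [dotProduct, mulVec]
      fun_prop
    have hFc : Continuous F := hFpi.comp (PiLp.continuous_ofLp 2 fun _ : Fin n => ℝ)
    have hgc : Continuous (fun v : E => v ⬝ᵥ Q *ᵥ v) := by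
      have h : Continuous (fun v : Fin n → ℝ => v ⬝ᵥ Q *ᵥ v) := by
        simp only [dotProduct, mulVec]; fun_prop
      exact h.comp (PiLp.continuous_ofLp 2 fun _ : Fin n => ℝ)
    obtain ⟨m, hm, hcoer⟩ : ∃ m : ℝ, 0 < m ∧ ∀ v : E, m * ‖v‖^2 ≤ v ⬝ᵥ Q *ᵥ v := by
      have hS : (Metric.sphere (0:E) 1).Nonempty := by
        refine ⟨EuclideanSpace.single ⟨0, hn⟩ 1, ?_⟩
        rw [mem_sphere_zero_iff_norm]
        rw [show ‖EuclideanSpace.single (⟨0, hn⟩ : Fin n) (1:ℝ)‖ = ‖(1:ℝ)‖ from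
          EuclideanSpace.norm_single _ _]
        exact norm_one
      obtain ⟨v₀, hv₀S, hv₀min⟩ := (isCompact_sphere (0:E) 1).exists_isMinOn hS
        hgc.continuousOn
      have hv₀n : ‖v₀‖ = 1 := by simpa using mem_sphere_zero_iff_norm.mp hv₀S
      have hv₀0 : v₀ ≠ 0 := fun h => by simp [h] at hv₀n
      have hmpos : 0 < v₀ ⬝ᵥ Q *ᵥ v₀ := by
        have h := hQ.dotProduct_mulVec_pos (x := WithLp.ofLp v₀) (fun h => hv₀0 (by simpa using congrArg (WithLp.toLp 2) h))
        simpa using h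
      refine ⟨v₀ ⬝ᵥ Q *ᵥ v₀, hmpos, fun v => ?_⟩
      rcases eq_or_ne v 0 with rfl | hv
      · simp
      · have hc0 : 0 < ‖v‖ := norm_pos_iff.mpr hv
        set c : ℝ := ‖v‖ with hc
        set u : E := (c⁻¹ : ℝ) • v with hu
        have huS : u ∈ Metric.sphere (0:E) 1 := by
          rw [mem_sphere_zero_iff_norm]
          exact norm_smul_inv_norm (𝕜 := ℝ) hv
        have hle : v₀ ⬝ᵥ Q *ᵥ v₀ ≤ u ⬝ᵥ Q *ᵥ u := isMinOn_iff.mp hv₀min u huS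
        have hscale : u ⬝ᵥ Q *ᵥ u = c⁻¹^2 * (v ⬝ᵥ Q *ᵥ v) := by
          show ((c⁻¹ : ℝ) • v) ⬝ᵥ Q *ᵥ ((c⁻¹ : ℝ) • v) = _
          rw [WithLp.ofLp_smul, smul_dotProduct, mulVec_smul, dotProduct_smul]
          simp only [smul_eq_mul]; ring
        rw [hscale] at hle
        have h2 := mul_le_mul_of_nonneg_right hle (sq_nonneg c)
        calc (v₀ ⬝ᵥ Q *ᵥ v₀) * c^2 ≤ c⁻¹^2 * (v ⬝ᵥ Q *ᵥ v) * c^2 := h2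
          _ = v ⬝ᵥ Q *ᵥ v := by field_simp
    set s' : E := WithLp.toLp 2 s with hs'
    have hCS : ∀ v : E, |s ⬝ᵥ v| ≤ ‖s'‖ * ‖v‖ := by
      intro v
      have h : s ⬝ᵥ v = inner ℝ s' v := by
        rw [PiLp.inner_apply]
        simp only [RCLike.inner_apply, conj_trivial]
        simp [dotProduct, hs', mul_comm]
      rw [h]
      exact abs_real_inner_le_norm s' v
    set R : ℝ := 2*‖s'‖/m + 1 with hR
    have hR0 : 0 < R := by positivity
    have hF0 : F 0 = 0 := by
      have hz : ∀ j, (0 : E) j = 0 := fun j => rfl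
      simp [hFdef, hz]
    have hbound : ∀ v : E, R < ‖v‖ → F 0 ≤ F v := by
      intro v hv
      rw [hF0]
      have h1 := hcoer v
      have h2 := hCS v
      have h3 : (0:ℝ) ≤ ∑ j, |v j| := Finset.sum_nonneg fun j _ => abs_nonneg _
      have h4 : m * R = 2*‖s'‖ + m := by rw [hR]; field_simp
      have h5 : m * R < m * ‖v‖ := by
        exact mul_lt_mul_of_pos_left hv hm
      have h6 : (1:ℝ) ≤ ‖v‖ := by
        have hRR : (0:ℝ) ≤ 2*‖s'‖/m := div_nonneg (by positivity) hm.le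
        have : (1:ℝ) ≤ R := by rw [hR]; linarith
        linarith
      have h7 : s ⬝ᵥ v ≤ |s ⬝ᵥ v| := le_abs_self _
      have h8 : (2*‖s'‖ + m) * ‖v‖ ≤ m * ‖v‖ * ‖v‖ := by
        have := mul_le_mul_of_nonneg_right h5.le (norm_nonneg v)
        rw [h4] at this
        linarith [this]
      have h1' : m * (‖v‖*‖v‖) ≤ v ⬝ᵥ Q *ᵥ v := by rw [← pow_two]; exact h1
      have h9 : m * 1 ≤ m * ‖v‖ := mul_le_mul_of_nonneg_left h6 hm.le
      have h10 : (0:ℝ) ≤ 2 * lam * ∑ j, |v j| := by positivity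
      simp only [hFdef]
      nlinarith [h8, h1', h9, h10, h2, h7, hm]
    have hev : ∀ᶠ v in Filter.cocompact E, F 0 ≤ F v := by
      rw [Filter.eventually_iff, Filter.mem_cocompact]
      refine ⟨Metric.closedBall 0 R, isCompact_closedBall _ _, fun v hv => ?_⟩
      refine hbound v ?_
      have : v ∉ Metric.closedBall (0:E) R := hv
      simpa [Metric.mem_closedBall, dist_zero_right, not_le] using this
    obtain ⟨x, hx⟩ := hFc.exists_forall_le' 0 hev
    exact ⟨WithLp.ofLp x, fun x' => hx (WithLp.toLp 2 x')⟩

theorem qp_lasso_strong_duality (n : ℕ) (Q : Matrix (Fin n) (Fin n) ℝ) (hQ : Q.PosDef)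
    (s : Fin n → ℝ) (lam : ℝ) (hlam : 0 < lam) :
    ∃ x : Fin n → ℝ, ∃ y : Fin n → ℝ,
      y = Q *ᵥ x ∧
      (∀ i, |y i - s i| ≤ lam) ∧
      (∀ z : Fin n → ℝ, (∀ i, |z i - s i| ≤ lam) → y ⬝ᵥ Q⁻¹ *ᵥ y ≤ z ⬝ᵥ Q⁻¹ *ᵥ z) ∧
      (∀ x' : Fin n → ℝ,
        x ⬝ᵥ Q *ᵥ x - 2 * (s ⬝ᵥ x) + 2 * lam * ∑ i, |x i| ≤
          x' ⬝ᵥ Q *ᵥ x' - 2 * (s ⬝ᵥ x') + 2 * lam * ∑ i, |x' i|) ∧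
      y ⬝ᵥ Q⁻¹ *ᵥ y = -(x ⬝ᵥ Q *ᵥ x - 2 * (s ⬝ᵥ x) + 2 * lam * ∑ i, |x i|) := by

  obtain ⟨x, hmin⟩ := exists_min Q hQ s lam hlam
  have hQt : Qᵀ = Q := by
    have h := hQ.1
    rwa [IsHermitian, conjTranspose_eq_transpose_of_trivial] at h
  have hcoord := fun i => coord_opt Q hQt s lam hlam x hmin i
  set y : Fin n → ℝ := Q *ᵥ x with hy
  have hdet : IsUnit Q.det := isUnit_iff_isUnit_det Q |>.mp hQ.isUnit
  have hinv : Q⁻¹ *ᵥ y = x := by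
    rw [hy, mulVec_mulVec, Matrix.nonsing_inv_mul Q hdet, one_mulVec]
  have hyy : y ⬝ᵥ Q⁻¹ *ᵥ y = x ⬝ᵥ y := by
    rw [hinv, dotProduct_comm]
  have hsum : x ⬝ᵥ y - s ⬝ᵥ x = -(lam * ∑ i, |x i|) := by
    have h1 : ∑ i, (y i - s i) * x i = -(lam * ∑ i, |x i|) := by
      rw [Finset.sum_congr rfl fun i _ => (hcoord i).2, Finset.mul_sum, ← Finset.sum_neg_distrib]
    have h2 : ∑ i, (y i - s i) * x i = x ⬝ᵥ y - s ⬝ᵥ x := by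
      rw [dotProduct_comm]
      simp [dotProduct, sub_mul, Finset.sum_sub_distrib]
    rw [← h2, h1]
  refine ⟨x, y, hy, fun i => (hcoord i).1, ?_, hmin, ?_⟩
  · intro z hz
    have hQinv : (Q⁻¹).PosDef := hQ.inv
    have h0 : 0 ≤ (z - y) ⬝ᵥ Q⁻¹ *ᵥ (z - y) := by
      have h := hQinv.posSemidef.dotProduct_mulVec_nonneg (z - y)
      simpa using h
    have hsymM : y ⬝ᵥ Q⁻¹ *ᵥ z = z ⬝ᵥ Q⁻¹ *ᵥ y := dot_symm _ hQinv.1 y z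
    have hzy : z ⬝ᵥ Q⁻¹ *ᵥ y = z ⬝ᵥ x := by rw [hinv]
    have hexp : (z - y) ⬝ᵥ Q⁻¹ *ᵥ (z - y) =
        z ⬝ᵥ Q⁻¹ *ᵥ z - 2 * (z ⬝ᵥ x) + x ⬝ᵥ y := by
      rw [sub_dotProduct, mulVec_sub, dotProduct_sub, dotProduct_sub, hsymM, hzy, hyy]
      ring
    rw [hexp] at h0
    have hzx : ∀ i, -(lam * |x i|) ≤ (z i - s i) * x i := by
      intro i
      have ha := abs_mul (z i - s i) (x i)
      have hb := neg_abs_le ((z i - s i) * x i)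
      have hc := mul_le_mul_of_nonneg_right (hz i) (abs_nonneg (x i))
      linarith [hb, ha ▸ hc]
    have hsz : s ⬝ᵥ x - lam * ∑ i, |x i| ≤ z ⬝ᵥ x := by
      have h1 : ∑ i, -(lam * |x i|) ≤ ∑ i, (z i - s i) * x i :=
        Finset.sum_le_sum fun i _ => hzx i
      have h2 : ∑ i, (z i - s i) * x i = z ⬝ᵥ x - s ⬝ᵥ x := by
        simp [dotProduct, sub_mul, Finset.sum_sub_distrib]
      have h3 : ∑ i, -(lam * |x i|) = -(lam * ∑ i, |x i|) := by
        rw [Finset.mul_sum, ← Finset.sum_neg_distrib]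
      rw [h2, h3] at h1
      linarith
    rw [hyy]
    linarith
  · rw [hyy]
    linarith
end

section
/- For a symmetric positive definite matrix Θ and vector θ, we have max_{X ≻ 0} (⟨Θ, X⟩ + log det X) = -log det(-Θ) - p when Θ is negative definite, i.e., sup over X ≻ 0 of trace(ΘX) + log det X equals -p - log det(-Θ) if Θ ≺ 0, and +∞ otherwise. -/
open Matrix

lemma trace_eq_sum_eig {n : Type*} [Fintype n] [DecidableEq n] {M : Matrix n n ℝ}
    (hM : M.IsHermitian) : M.trace = ∑ i, hM.eigenvalues i := by
  conv_lhs => rw [hM.spectral_theorem]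
  rw [Unitary.conjStarAlgAut_apply, trace_mul_cycle]
  rw [show star (hM.eigenvectorUnitary : Matrix n n ℝ) * (hM.eigenvectorUnitary : Matrix n n ℝ) = 1
    from Matrix.mem_unitaryGroup_iff'.mp (hM.eigenvectorUnitary).2, one_mul, trace_diagonal]
  simp

lemma logdet_le {n : Type*} [Fintype n] [DecidableEq n] {M : Matrix n n ℝ}
    (hM : M.PosDef) : Real.log M.det ≤ M.trace - (Fintype.card n : ℝ) := by
  have hev := hM.eigenvalues_pos
  have hdet : M.det = ∏ i, hM.isHermitian.eigenvalues i := by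
    simpa using hM.isHermitian.det_eq_prod_eigenvalues
  rw [hdet, trace_eq_sum_eig hM.isHermitian,
    Real.log_prod (fun i _ => (hev i).ne')]
  calc ∑ i, Real.log (hM.isHermitian.eigenvalues i)
      ≤ ∑ i, (hM.isHermitian.eigenvalues i - 1) :=
        Finset.sum_le_sum fun i _ => Real.log_le_sub_one_of_pos (hev i)
    _ = _ := by rw [Finset.sum_sub_distrib]; simp [Finset.card_univ]

open scoped MatrixOrder in
lemma exists_sqrt_helper {n : Type*} [Fintype n] [DecidableEq n] {A : Matrix n n ℝ}
    (hA : A.PosSemidef) : ∃ S : Matrix n n ℝ, S * S = A ∧ S.IsHermitian :=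
  ⟨CFC.sqrt A, CFC.sqrt_mul_sqrt_self A (nonneg_iff_posSemidef.mpr hA),
    (nonneg_iff_posSemidef.mp (CFC.sqrt_nonneg A)).1⟩

lemma posdef_conj {n : Type*} [Fintype n] [DecidableEq n] {A B : Matrix n n ℝ}
    (hA : A.PosDef) (hB : B.IsHermitian) (hBu : IsUnit B.det) : (B * A * B).PosDef := by
  refine PosDef.of_dotProduct_mulVec_pos ?_ fun x hx => ?_
  · have : (B * A * B)ᴴ = Bᴴ * Aᴴ * Bᴴ := by
      rw [conjTranspose_mul, conjTranspose_mul, mul_assoc]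
    rw [IsHermitian, this, hA.isHermitian.eq, hB.eq]
  · have hBx : B *ᵥ x ≠ 0 := by
      intro h
      apply hx
      have := congrArg (B⁻¹ *ᵥ ·) h
      simpa [mulVec_mulVec, Matrix.nonsing_inv_mul B hBu] using this
    have h2 := hA.dotProduct_mulVec_pos hBx
    have hBT : Bᵀ = B := hB
    calc (0:ℝ) < star (B *ᵥ x) ⬝ᵥ (A *ᵥ (B *ᵥ x)) := h2
      _ = star x ⬝ᵥ ((B * A * B) *ᵥ x) := by
          have hv : x ᵥ* B = B *ᵥ x := by rw [← mulVec_transpose, hBT]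
          rw [star_trivial, star_trivial, ← mulVec_mulVec, ← mulVec_mulVec,
            dotProduct_mulVec x, hv, dotProduct_mulVec (B *ᵥ x)]

theorem sup_trace_add_logDet (p : ℕ) (Θ : Matrix (Fin p) (Fin p) ℝ)
    (hΘ : Θ.IsHermitian) :
    ((-Θ).PosDef →
      IsGreatest {v : ℝ | ∃ X : Matrix (Fin p) (Fin p) ℝ, X.PosDef ∧
          v = (Θ * X).trace + Real.log X.det}
        (-(p : ℝ) - Real.log (-Θ).det)) ∧
    (¬ (-Θ).PosDef →
      ∀ c : ℝ, ∃ X : Matrix (Fin p) (Fin p) ℝ, X.PosDef ∧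
        c < (Θ * X).trace + Real.log X.det) := by
  constructor
  · intro hA
    have hAu : IsUnit (-Θ).det := hA.det_pos.ne'.isUnit
    constructor
    · refine ⟨(-Θ)⁻¹, hA.inv, ?_⟩
      have h1 : Θ * (-Θ)⁻¹ = -1 := by
        rw [show Θ * (-Θ)⁻¹ = -(-Θ * (-Θ)⁻¹) by rw [neg_mul, neg_neg],
          Matrix.mul_nonsing_inv _ hAu]
      have h2 : ((-Θ)⁻¹).det = ((-Θ).det)⁻¹ := by
        rw [Matrix.det_nonsing_inv, Ring.inverse_eq_inv']
      rw [h1, h2, Real.log_inv, trace_neg, trace_one]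
      simp
      ring
    · rintro v ⟨X, hX, rfl⟩
      obtain ⟨S, hSS, hSH⟩ := exists_sqrt_helper hA.posSemidef
      have hdS : S.det * S.det = (-Θ).det := by rw [← det_mul, hSS]
      have hSu : IsUnit S.det := by
        rcases eq_or_ne S.det 0 with h | h
        · exfalso; rw [h, mul_zero] at hdS; exact hA.det_pos.ne' hdS.symm
        · exact h.isUnit
      have hM : (S * X * S).PosDef := posdef_conj hX hSH hSu
      have htr : (Θ * X).trace = -(S * X * S).trace := by
        rw [trace_mul_cycle S X S, hSS,
          show Θ * X = -(-Θ * X) by rw [neg_mul, neg_neg], trace_neg]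
      have hdM : (S * X * S).det = (-Θ).det * X.det := by
        rw [det_mul, det_mul, ← hdS]; ring
      have hlog : Real.log (S * X * S).det = Real.log (-Θ).det + Real.log X.det := by
        rw [hdM, Real.log_mul hA.det_pos.ne' hX.det_pos.ne']
      have hle := logdet_le hM
      simp only [Fintype.card_fin] at hle
      rw [htr]
      linarith
  · intro h c
    obtain ⟨x, hx0, hxq⟩ : ∃ x : Fin p → ℝ, x ≠ 0 ∧ 0 ≤ x ⬝ᵥ (Θ *ᵥ x) := by
      by_contra hcon
      push_neg at hcon
      exact h (PosDef.of_dotProduct_mulVec_pos hΘ.neg fun x hx => by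
        have := hcon x hx
        simp only [star_trivial, neg_mulVec, dotProduct_neg]
        linarith)
    have hs : 0 < x ⬝ᵥ x := by
      have := Matrix.dotProduct_star_self_pos_iff (R := ℝ) |>.mpr hx0
      simpa [star_trivial] using this
    set s : ℝ := x ⬝ᵥ x with hsdef
    set t : ℝ := Real.exp (c - Θ.trace) / s with htdef
    have ht : 0 < t := div_pos (Real.exp_pos _) hs
    refine ⟨1 + t • vecMulVec x x, ?_, ?_⟩
    · refine Matrix.PosDef.add_posSemidef Matrix.PosDef.one (PosSemidef.of_dotProduct_mulVec_nonneg ?_ fun y => ?_)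
      · show (t • vecMulVec x x)ᴴ = _
        ext i j
        simp [vecMulVec, mul_comm]
      · have : (t • vecMulVec x x) *ᵥ y = (t * (x ⬝ᵥ y)) • x := by
          ext i
          simp [vecMulVec, mulVec, dotProduct, Finset.mul_sum]
          ring_nf
          rw [Finset.mul_sum]
          exact Finset.sum_congr rfl fun j _ => by ring
        rw [this]
        simp only [star_trivial, dotProduct_smul, smul_eq_mul]
        calc (0:ℝ) ≤ t * (x ⬝ᵥ y)^2 := by positivity
          _ = t * (x ⬝ᵥ y) * (y ⬝ᵥ x) := by rw [dotProduct_comm y x]; ring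
    · have hdet : (1 + t • vecMulVec x x).det = 1 + t * s := by
        have h1 : t • vecMulVec x x = vecMulVec (t • x) x := by
          ext i j; simp [vecMulVec]; ring
        rw [h1, vecMulVec_eq (Fin 1), Matrix.det_one_add_replicateCol_mul_replicateRow]
        simp [hsdef, dotProduct, Finset.mul_sum]
        exact Finset.sum_congr rfl fun j _ => by ring
      have htrace : (Θ * (1 + t • vecMulVec x x)).trace
          = Θ.trace + t * (x ⬝ᵥ (Θ *ᵥ x)) := by
        rw [mul_add, mul_one, trace_add, Matrix.mul_smul, trace_smul]
        congr 1
        simp only [smul_eq_mul]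
        congr 1
        simp only [trace, diag, mul_apply, vecMulVec, dotProduct, mulVec, of_apply]
        rw [Finset.sum_comm]
        have hsymm : ∀ i j, Θ j i = Θ i j := fun i j => by
          have := congrFun (congrFun hΘ.eq i) j
          simpa [conjTranspose_apply] using this
        exact Finset.sum_congr rfl fun i _ => by
          rw [Finset.mul_sum]
          exact Finset.sum_congr rfl fun j _ => by rw [hsymm i j]; ring
      rw [hdet, htrace]
      have hts : t * s = Real.exp (c - Θ.trace) := by
        rw [htdef, div_mul_cancel₀ _ hs.ne']
      have hlog : c - Θ.trace < Real.log (1 + t * s) := by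
        rw [Real.lt_log_iff_exp_lt (by positivity), hts]
        linarith [Real.exp_pos (c - Θ.trace)]
      nlinarith [mul_nonneg ht.le hxq]
end

section
/- The optimal solution W of max { log det W : ‖W - S‖_∞ ≤ λ } over symmetric positive definite matrices satisfies W_{kk} = S_{kk} + λ for every diagonal index k. -/
open Matrix

lemma aux_psd_std (p : ℕ) (k : Fin p) (e : ℝ) (he : 0 ≤ e) :
    (Matrix.single k k e).PosSemidef := by
  rw [Matrix.posSemidef_iff_dotProduct_mulVec]
  constructor
  · ext a b
    simp only [Matrix.conjTranspose_apply, star_trivial, Matrix.single, Matrix.of_apply]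
    by_cases h1 : k = a <;> by_cases h2 : k = b <;> simp [h1, h2]
  · intro x
    have hmv : Matrix.single k k e *ᵥ x = fun a => if k = a then e * x k else 0 := by
      funext a
      simp only [Matrix.mulVec, dotProduct, Matrix.single, Matrix.of_apply]
      by_cases h1 : k = a
      · rw [if_pos h1, Finset.sum_eq_single k]
        · rw [if_pos ⟨h1, rfl⟩]
        · intro b _ hb
          rw [if_neg (by exact fun h => hb h.2.symm), zero_mul]
        · simp
      · rw [if_neg h1, Finset.sum_eq_zero]
        intro b _
        rw [if_neg (by exact fun h => h1 h.1), zero_mul]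
    rw [hmv]
    simp only [dotProduct, star_trivial]
    rw [Finset.sum_eq_single k]
    · rw [if_pos rfl]
      nlinarith [sq_nonneg (x k)]
    · intro b _ hb
      rw [if_neg (by exact fun h => hb h.symm), mul_zero]
    · simp

lemma aux_diag_pos (p : ℕ) (A : Matrix (Fin p) (Fin p) ℝ) (hA : A.PosDef) (k : Fin p) :
    0 < A k k := by
  have hx : (Pi.single k 1 : Fin p → ℝ) ≠ 0 := by
    intro h
    have := congrFun h k
    simp at this
  have := (Matrix.posDef_iff_dotProduct_mulVec.mp hA).2 (x := Pi.single k 1) hx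
  simpa [dotProduct, Matrix.mulVec_single, Pi.single_apply] using this

lemma aux_det_add_std (p : ℕ) (W : Matrix (Fin p) (Fin p) ℝ) (k : Fin p) (e : ℝ) :
    (W + Matrix.single k k e).det = W.det + e * W.adjugate k k := by
  have hrow : W + Matrix.single k k e
      = W.updateRow k (W k + e • (Pi.single k 1 : Fin p → ℝ)) := by
    ext a b
    by_cases h1 : a = k
    · rw [h1, Matrix.add_apply, Matrix.updateRow_self]
      simp only [Pi.add_apply, Pi.smul_apply,
        Matrix.single, Matrix.of_apply, Pi.single_apply, smul_eq_mul, true_and]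
      by_cases h2 : b = k
      · simp [h2, eq_comm]
      · simp [h2, Ne.symm h2]
    · rw [Matrix.add_apply, Matrix.updateRow_ne h1]
      simp only [Matrix.single, Matrix.of_apply]
      rw [if_neg (by exact fun h => h1 h.1.symm), add_zero]
  rw [hrow, Matrix.det_updateRow_add, Matrix.updateRow_eq_self,
    Matrix.det_updateRow_smul, Matrix.adjugate_apply]

theorem dual_solution_diagonal (p : ℕ) (S : Matrix (Fin p) (Fin p) ℝ)
    (hS : S.PosSemidef) (lam : ℝ) (hlam : 0 < lam)
    (W : Matrix (Fin p) (Fin p) ℝ) (hW : W.PosDef)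
    (hfeas : ∀ i j, |W i j - S i j| ≤ lam)
    (hopt : ∀ W' : Matrix (Fin p) (Fin p) ℝ, W'.PosDef →
      (∀ i j, |W' i j - S i j| ≤ lam) → W'.det ≤ W.det) :
    ∀ k, W k k = S k k + lam := by
  intro k
  have hle : W k k ≤ S k k + lam := by
    have h := abs_le.1 (hfeas k k); linarith [h.2]
  by_contra hne
  have hlt : W k k < S k k + lam := lt_of_le_of_ne hle hne
  have hεpos : 0 < S k k + lam - W k k := by linarith
  have hW'pd : (W + Matrix.single k k (S k k + lam - W k k)).PosDef :=
    hW.add_posSemidef (aux_psd_std p k _ hεpos.le)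
  have hfeas' : ∀ i j,
      |(W + Matrix.single k k (S k k + lam - W k k)) i j - S i j| ≤ lam := by
    intro i j
    rw [Matrix.add_apply]
    by_cases h : k = i ∧ k = j
    · obtain ⟨h1, h2⟩ := h
      subst h1; subst h2
      rw [Matrix.single_apply_same]
      have : W k k + (S k k + lam - W k k) - S k k = lam := by ring
      rw [this, abs_of_pos hlam]
    · rw [Matrix.single_apply_of_ne _ _ _ _ _ h, add_zero]
      exact hfeas i j
  have hdet := aux_det_add_std p W k (S k k + lam - W k k)
  have hinvpd : (W⁻¹).PosDef := hW.inv
  have hdiag : 0 < W⁻¹ k k := aux_diag_pos p W⁻¹ hinvpd k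
  have hdetpos : 0 < W.det := hW.det_pos
  have hadj : W.adjugate k k = W.det * W⁻¹ k k := by
    have hinv : W⁻¹ = (W.det)⁻¹ • W.adjugate := by
      rw [Matrix.inv_def, Ring.inverse_eq_inv]
    have h2 : W⁻¹ k k = (W.det)⁻¹ * W.adjugate k k := by
      rw [hinv, Matrix.smul_apply, smul_eq_mul]
    rw [h2]
    field_simp
  have hlt' : W.det < (W + Matrix.single k k (S k k + lam - W k k)).det := by
    rw [hdet, hadj]
    nlinarith [mul_pos (mul_pos hεpos hdetpos) hdiag]
  exact absurd (hopt _ hW'pd hfeas') (not_le.2 hlt')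
end

section
/- For the function f(X) = -log det X + trace(SX) + λ‖X‖_1 on positive definite matrices, a matrix X ≻ 0 is the minimizer if and only if for all i, j: S_{ij} - (X^{-1})_{ij} = -λ when X_{ij} > 0, S_{ij} - (X^{-1})_{ij} = λ when X_{ij} < 0, and |S_{ij} - (X^{-1})_{ij}| ≤ λ when X_{ij} = 0. -/
open Matrix Filter Topology

section Aux

variable {p : ℕ}

open scoped MatrixOrder

private lemma herm_apply {A : Matrix (Fin p) (Fin p) ℝ} (hA : A.IsHermitian) (i j : Fin p) :
    A j i = A i j := by
  have := hA.apply j i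
  simpa using this.symm

private lemma trace_eq_sum_eigenvalues {A : Matrix (Fin p) (Fin p) ℝ} (hA : A.IsHermitian) :
    A.trace = ∑ i, hA.eigenvalues i := by
  simpa using hA.trace_eq_sum_eigenvalues

/-- For a positive definite matrix, `log det M ≤ trace M - p`. -/
private lemma log_det_le_trace {M : Matrix (Fin p) (Fin p) ℝ} (hM : M.PosDef) :
    Real.log M.det ≤ M.trace - p := by
  rw [hM.isHermitian.det_eq_prod_eigenvalues, trace_eq_sum_eigenvalues hM.isHermitian]
  have hpos : ∀ i ∈ Finset.univ, (hM.isHermitian.eigenvalues i : ℝ) ≠ 0 :=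
    fun i _ => (hM.eigenvalues_pos i).ne'
  simp only [RCLike.ofReal_real_eq_id, id] at *
  rw [Real.log_prod hpos]
  have : ∀ i ∈ (Finset.univ : Finset (Fin p)),
      Real.log (hM.isHermitian.eigenvalues i) ≤ hM.isHermitian.eigenvalues i - 1 :=
    fun i _ => Real.log_le_sub_one_of_pos (hM.eigenvalues_pos i)
  calc ∑ i, Real.log (hM.isHermitian.eigenvalues i)
      ≤ ∑ i, (hM.isHermitian.eigenvalues i - 1) := Finset.sum_le_sum this
    _ = (∑ i, hM.isHermitian.eigenvalues i) - p := by
        rw [Finset.sum_sub_distrib]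
        simp

/-- Congruence of a positive definite matrix by an invertible matrix. -/
private lemma posDef_conj {M B : Matrix (Fin p) (Fin p) ℝ} (hM : M.PosDef)
    (hB : IsUnit B.det) : (B * M * Bᴴ).PosDef := by
  refine Matrix.PosDef.of_dotProduct_mulVec_pos ?_ (fun x hx => ?_)
  · have : (B * M * Bᴴ)ᴴ = B * Mᴴ * Bᴴ := by
      simp [Matrix.conjTranspose_mul, Matrix.mul_assoc]
    rw [Matrix.IsHermitian, this, hM.isHermitian.eq]
  · have hBH : IsUnit (Bᴴ).det := by
      rwa [Matrix.det_conjTranspose, star_trivial]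
    have hinj : Function.Injective (Bᴴ).mulVec :=
      Matrix.mulVec_injective_iff_isUnit.mpr ((Matrix.isUnit_iff_isUnit_det _).mpr hBH)
    have hxne : Bᴴ *ᵥ x ≠ 0 := by
      intro h
      exact hx (hinj (by simpa using h))
    have := hM.dotProduct_mulVec_pos hxne
    simpa only [star_mulVec, dotProduct_mulVec, Matrix.vecMul_vecMul,
      Matrix.mul_assoc, Matrix.conjTranspose_conjTranspose] using this

private lemma sqrt_posDef {W : Matrix (Fin p) (Fin p) ℝ} (hW : W.PosDef) :
    IsUnit (CFC.sqrt W).det := by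
  have h : CFC.sqrt W * CFC.sqrt W = W := CFC.sqrt_mul_sqrt_self W hW.posSemidef.nonneg
  have : (CFC.sqrt W).det * (CFC.sqrt W).det = W.det := by
    rw [← Matrix.det_mul, h]
  have hd : (CFC.sqrt W).det ≠ 0 := by
    intro h0
    rw [h0, mul_zero] at this
    exact hW.det_pos.ne (by rw [this])
  exact hd.isUnit

/-- Gradient inequality for `log det`:
`log det Y - log det X ≤ trace (X⁻¹ (Y - X))`. -/
private lemma logdet_grad_ineq {X Y : Matrix (Fin p) (Fin p) ℝ}
    (hX : X.PosDef) (hY : Y.PosDef) :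
    Real.log Y.det - Real.log X.det ≤ (X⁻¹ * (Y - X)).trace := by
  have hXinv : (X⁻¹).PosDef := hX.inv
  set R := CFC.sqrt X⁻¹ with hRdef
  have hRR : R * R = X⁻¹ := CFC.sqrt_mul_sqrt_self _ hXinv.posSemidef.nonneg
  have hRherm : R.IsHermitian := (CFC.sqrt_nonneg X⁻¹).posSemidef.1
  have hRunit : IsUnit R.det := sqrt_posDef hXinv
  have hM : (R * Y * Rᴴ).PosDef := posDef_conj hY hRunit
  have hMle := log_det_le_trace hM
  have hdet : (R * Y * Rᴴ).det = (X⁻¹).det * Y.det := by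
    rw [Matrix.det_mul, Matrix.det_mul, hRherm.eq, ← hRR, Matrix.det_mul]
    ring
  have htr : (R * Y * Rᴴ).trace = (X⁻¹ * Y).trace := by
    rw [hRherm.eq, Matrix.trace_mul_cycle, hRR]
  have hdetXinv : (X⁻¹).det = (X.det)⁻¹ := by
    rw [Matrix.det_nonsing_inv, Ring.inverse_eq_inv']
  have hlogM : Real.log (R * Y * Rᴴ).det = Real.log Y.det - Real.log X.det := by
    rw [hdet, hdetXinv, Real.log_mul (inv_ne_zero hX.det_pos.ne') hY.det_pos.ne', Real.log_inv]
    ring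
  have htrXX : (X⁻¹ * X).trace = (p : ℝ) := by
    rw [Matrix.nonsing_inv_mul X hX.det_pos.ne'.isUnit, Matrix.trace_one]
    simp
  have : Real.log Y.det - Real.log X.det ≤ (X⁻¹ * Y).trace - p := by
    rw [← hlogM, ← htr]; exact hMle
  calc Real.log Y.det - Real.log X.det ≤ (X⁻¹ * Y).trace - p := this
    _ = (X⁻¹ * (Y - X)).trace := by
        rw [Matrix.mul_sub, Matrix.trace_sub, htrXX]

private lemma trace_mul_eq (A B : Matrix (Fin p) (Fin p) ℝ) :
    (A * B).trace = ∑ i, ∑ j, A i j * B j i := by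
  simp [Matrix.trace, Matrix.mul_apply, Matrix.diag]

private lemma sum_point (f g : Fin p → Fin p → ℝ) (i j : Fin p)
    (h : ∀ k l, ¬(k = i ∧ l = j) → f k l = g k l) :
    ∑ k, ∑ l, f k l = (∑ k, ∑ l, g k l) + (f i j - g i j) := by
  classical
  have key : ∑ k, ∑ l, (f k l - g k l) = f i j - g i j := by
    rw [← Finset.sum_product', Finset.univ_product_univ]
    rw [← Finset.sum_subset (Finset.subset_univ ({(i,j)} : Finset (Fin p × Fin p)))
      (fun x _ hx => by
        have := h x.1 x.2 (fun hc => hx (by simp [Finset.mem_singleton, Prod.ext_iff, hc.1, hc.2]))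
        simp [this])]
    simp
  have h2 : ∑ k, ∑ l, (f k l - g k l) = (∑ k, ∑ l, f k l) - (∑ k, ∑ l, g k l) := by
    simp [Finset.sum_sub_distrib]
  linarith [key, h2]

private lemma sum_two_point (f g : Fin p → Fin p → ℝ) (i j : Fin p) (hij : i ≠ j)
    (h : ∀ k l, ¬(k = i ∧ l = j) → ¬(k = j ∧ l = i) → f k l = g k l) :
    ∑ k, ∑ l, f k l = (∑ k, ∑ l, g k l) + (f i j - g i j) + (f j i - g j i) := by
  classical
  have hne : ((i,j) : Fin p × Fin p) ≠ (j,i) := by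
    simp [Prod.ext_iff]; intro h'; exact fun _ => hij h'
  have key : ∑ k, ∑ l, (f k l - g k l) = (f i j - g i j) + (f j i - g j i) := by
    rw [← Finset.sum_product', Finset.univ_product_univ]
    rw [← Finset.sum_subset (Finset.subset_univ ({(i,j),(j,i)} : Finset (Fin p × Fin p)))
      (fun x _ hx => by
        simp only [Finset.mem_insert, Finset.mem_singleton] at hx
        push_neg at hx
        have := h x.1 x.2
          (fun hc => hx.1 (by simp [Prod.ext_iff, hc.1, hc.2]))
          (fun hc => hx.2 (by simp [Prod.ext_iff, hc.1, hc.2]))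
        simp [this])]
    rw [Finset.sum_pair hne]
  have h2 : ∑ k, ∑ l, (f k l - g k l) = (∑ k, ∑ l, f k l) - (∑ k, ∑ l, g k l) := by
    simp [Finset.sum_sub_distrib]
  linarith [key, h2]

private lemma entry_sq_le (x : Fin p → ℝ) (k : Fin p) : x k * x k ≤ x ⬝ᵥ x :=
  Finset.single_le_sum (f := fun l => x l * x l) (fun l _ => mul_self_nonneg _)
    (Finset.mem_univ k)

private lemma quad_bound (K : Matrix (Fin p) (Fin p) ℝ) (x : Fin p → ℝ) :
    |x ⬝ᵥ (K *ᵥ x)| ≤ (∑ k, ∑ l, |K k l|) * (x ⬝ᵥ x) := by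
  have h1 : x ⬝ᵥ (K *ᵥ x) = ∑ k, ∑ l, x k * (K k l * x l) := by
    simp [dotProduct, Matrix.mulVec, Finset.mul_sum]
  rw [h1]
  calc |∑ k, ∑ l, x k * (K k l * x l)| ≤ ∑ k, ∑ l, |x k * (K k l * x l)| := by
        refine (Finset.abs_sum_le_sum_abs _ _).trans ?_
        exact Finset.sum_le_sum fun k _ => Finset.abs_sum_le_sum_abs _ _
    _ ≤ ∑ k, ∑ l, |K k l| * (x ⬝ᵥ x) := by
        refine Finset.sum_le_sum fun k _ => Finset.sum_le_sum fun l _ => ?_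
        have h2 : |x k * (K k l * x l)| = |K k l| * (|x k| * |x l|) := by
          rw [abs_mul, abs_mul]; ring
        rw [h2]
        refine mul_le_mul_of_nonneg_left ?_ (abs_nonneg _)
        have hk := entry_sq_le x k
        have hl := entry_sq_le x l
        have hxx : 0 ≤ x ⬝ᵥ x := by
          simpa [dotProduct] using Finset.sum_nonneg
            (fun l (_ : l ∈ Finset.univ) => mul_self_nonneg (x l))
        nlinarith [abs_nonneg (x k), abs_nonneg (x l), sq_abs (x k), sq_abs (x l)]
    _ = (∑ k, ∑ l, |K k l|) * (x ⬝ᵥ x) := by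
        rw [Finset.sum_mul]; congr 1; ext k; rw [Finset.sum_mul]

private lemma one_add_smul_posDef (K : Matrix (Fin p) (Fin p) ℝ) (hK : K.IsHermitian) (t : ℝ)
    (ht : |t| * (∑ k, ∑ l, |K k l|) < 1) : ((1 : Matrix (Fin p) (Fin p) ℝ) + t • K).PosDef := by
  have hherm : ((1 : Matrix (Fin p) (Fin p) ℝ) + t • K).IsHermitian := by
    refine Matrix.isHermitian_one.add ?_
    refine Matrix.IsHermitian.ext fun k l => ?_
    simp only [Matrix.smul_apply, star_trivial, smul_eq_mul]
    have h := hK.apply l k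
    simp only [star_trivial] at h
    rw [h]
  refine Matrix.PosDef.of_dotProduct_mulVec_pos hherm (fun x hx => ?_)
  · have hxx : 0 < x ⬝ᵥ x := by
      have := dotProduct_star_self_pos_iff (v := x)
      simp only [star_trivial] at this
      exact this.mpr hx
    have hq := quad_bound K x
    have key : |t * (x ⬝ᵥ (K *ᵥ x))| < x ⬝ᵥ x := by
      rw [abs_mul]
      calc |t| * |x ⬝ᵥ (K *ᵥ x)| ≤ |t| * ((∑ k, ∑ l, |K k l|) * (x ⬝ᵥ x)) :=
            mul_le_mul_of_nonneg_left hq (abs_nonneg t)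
        _ = (|t| * (∑ k, ∑ l, |K k l|)) * (x ⬝ᵥ x) := by ring
        _ < 1 * (x ⬝ᵥ x) := by exact mul_lt_mul_of_pos_right ht hxx
        _ = x ⬝ᵥ x := one_mul _
    have hval : star x ⬝ᵥ (((1 : Matrix (Fin p) (Fin p) ℝ) + t • K) *ᵥ x)
        = x ⬝ᵥ x + t * (x ⬝ᵥ (K *ᵥ x)) := by
      simp [Matrix.add_mulVec, Matrix.smul_mulVec, dotProduct_add,
        dotProduct_smul, star_trivial, smul_eq_mul]
    rw [hval]
    have := abs_lt.mp key
    linarith [this.1]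

/-- Positive definiteness is stable under small Hermitian perturbations. -/
private lemma posdef_perturb {X H : Matrix (Fin p) (Fin p) ℝ} (hX : X.PosDef)
    (hH : H.IsHermitian) :
    ∃ δ : ℝ, 0 < δ ∧ ∀ t : ℝ, |t| < δ → (X + t • H).PosDef := by
  set B := CFC.sqrt X with hB
  have hBB : B * B = X := CFC.sqrt_mul_sqrt_self _ hX.posSemidef.nonneg
  have hBh : B.IsHermitian := (CFC.sqrt_nonneg X).posSemidef.1
  have hBu : IsUnit B.det := sqrt_posDef hX
  set K := B⁻¹ * H * B⁻¹ with hK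
  have hBinvh : (B⁻¹).IsHermitian := hBh.inv
  have hKh : K.IsHermitian := by
    rw [Matrix.IsHermitian, hK, Matrix.conjTranspose_mul, Matrix.conjTranspose_mul,
      hBinvh.eq, hH.eq, ← Matrix.mul_assoc]
  set s := ∑ k, ∑ l, |K k l| with hs
  have hs0 : 0 ≤ s := Finset.sum_nonneg fun k _ => Finset.sum_nonneg fun l _ => abs_nonneg _
  refine ⟨1 / (s + 1), by positivity, fun t ht => ?_⟩
  have hts : |t| * s < 1 := by
    have h1 : |t| * (s + 1) < 1 := by
      rw [div_eq_mul_inv, one_mul] at ht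
      have := (lt_div_iff₀ (by linarith : (0:ℝ) < s + 1)).mp (by
        rw [div_eq_mul_inv, one_mul]; exact ht)
      linarith
    nlinarith [abs_nonneg t]
  have h1 : ((1 : Matrix (Fin p) (Fin p) ℝ) + t • K).PosDef := one_add_smul_posDef K hKh t hts
  have hmid : B * K * B = H := by
    rw [hK]
    calc B * (B⁻¹ * H * B⁻¹) * B = (B * B⁻¹) * H * (B⁻¹ * B) := by
          simp only [Matrix.mul_assoc]
      _ = H := by
          rw [Matrix.mul_nonsing_inv _ hBu, Matrix.nonsing_inv_mul _ hBu, one_mul, mul_one]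
  have hcong : B * ((1 : Matrix (Fin p) (Fin p) ℝ) + t • K) * Bᴴ = X + t • H := by
    rw [hBh.eq]
    calc B * ((1 : Matrix (Fin p) (Fin p) ℝ) + t • K) * B
        = B * B + t • (B * K * B) := by
          rw [Matrix.mul_add, Matrix.add_mul, mul_one, Matrix.mul_smul, Matrix.smul_mul]
      _ = X + t • H := by rw [hBB, hmid]
  rw [← hcong]
  exact posDef_conj h1 hBu

private lemma cont_inv_entry (X H : Matrix (Fin p) (Fin p) ℝ) (hdet : X.det ≠ 0) (i j : Fin p) :
    ContinuousAt (fun t : ℝ => (X + t • H)⁻¹ i j) 0 := by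
  have h1 : Continuous fun t : ℝ => X + t • H := by continuity
  have h2 : ContinuousAt Inv.inv (X + (0:ℝ) • H) := by
    apply continuousAt_matrix_inv
    have he : (Ring.inverse : ℝ → ℝ) = Inv.inv := funext fun x => Ring.inverse_eq_inv x
    rw [he]
    apply continuousAt_inv₀
    simpa using hdet
  have h3 : ContinuousAt (fun t : ℝ => (X + t • H)⁻¹) 0 :=
    ContinuousAt.comp (f := fun t : ℝ => X + t • H) (g := Inv.inv) h2 h1.continuousAt
  exact ((continuous_apply j).continuousAt.comp
    ((continuous_apply i).continuousAt.comp h3))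

private lemma right_lim_le {g : ℝ → ℝ} {a δ : ℝ} (hg : ContinuousAt g 0) (hδ : 0 < δ)
    (h : ∀ t : ℝ, 0 < t → t < δ → g t ≤ a) : g 0 ≤ a := by
  have htend : Tendsto g (𝓝[>] (0:ℝ)) (𝓝 (g 0)) := hg.continuousWithinAt.tendsto
  refine le_of_tendsto htend ?_
  filter_upwards [Ioo_mem_nhdsGT_of_mem (by constructor <;> [rfl; exact hδ] :
    (0:ℝ) ∈ Set.Ico 0 δ)] with t ht
  exact h t ht.1 ht.2

private lemma left_lim_ge {g : ℝ → ℝ} {a δ : ℝ} (hg : ContinuousAt g 0) (hδ : 0 < δ)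
    (h : ∀ t : ℝ, -δ < t → t < 0 → a ≤ g t) : a ≤ g 0 := by
  have htend : Tendsto g (𝓝[<] (0:ℝ)) (𝓝 (g 0)) := hg.continuousWithinAt.tendsto
  refine ge_of_tendsto htend ?_
  filter_upwards [Ioo_mem_nhdsLT_of_mem (by constructor <;> [exact neg_neg_of_pos hδ; rfl] :
    (0:ℝ) ∈ Set.Ioc (-δ) 0)] with t ht
  exact h t ht.1 ht.2

end Aux

theorem sml_subgradient_characterization (p : ℕ) (S : Matrix (Fin p) (Fin p) ℝ)
    (hS : S.IsHermitian) (lam : ℝ) (hlam : 0 < lam)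
    (X : Matrix (Fin p) (Fin p) ℝ) (hX : X.PosDef) :
    (∀ Y : Matrix (Fin p) (Fin p) ℝ, Y.PosDef →
      -Real.log X.det + (S * X).trace + lam * ∑ i, ∑ j, |X i j| ≤
        -Real.log Y.det + (S * Y).trace + lam * ∑ i, ∑ j, |Y i j|) ↔
    (∀ i j,
      (0 < X i j → S i j - X⁻¹ i j = -lam) ∧
      (X i j < 0 → S i j - X⁻¹ i j = lam) ∧
      (X i j = 0 → |S i j - X⁻¹ i j| ≤ lam)) := by
  constructor
  · -- forward direction
    intro hmin i j
    have hXherm := hX.isHermitian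
    obtain ⟨H, c, hc, hHh, htr, hl1⟩ : ∃ (H : Matrix (Fin p) (Fin p) ℝ) (c : ℝ), 0 < c ∧
        H.IsHermitian ∧
        (∀ A : Matrix (Fin p) (Fin p) ℝ, A.IsHermitian → (A * H).trace = c * A i j) ∧
        (∀ t : ℝ, (∑ k, ∑ l, |(X + t • H) k l|)
          = (∑ k, ∑ l, |X k l|) + c * (|X i j + t| - |X i j|)) := by
      by_cases hij : i = j
      · subst hij
        refine ⟨Matrix.single i i (1:ℝ), 1, one_pos, ?_, ?_, ?_⟩
        · refine Matrix.IsHermitian.ext fun k l => ?_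
          simp only [Matrix.single, Matrix.of_apply, star_trivial]
          aesop
        · intro A _
          rw [one_mul]
          simp [Matrix.trace, Matrix.mul_apply, Matrix.diag, Matrix.single,
            Matrix.of_apply, mul_ite, ite_and, Finset.sum_ite_eq]
        · intro t
          have hentry : ∀ k l, ¬(k = i ∧ l = i) →
              |(X + t • Matrix.single i i (1:ℝ)) k l| = |X k l| := by
            intro k l hkl
            have hcond : ¬(i = k ∧ i = l) := fun hc => hkl ⟨hc.1.symm, hc.2.symm⟩
            simp [Matrix.add_apply, Matrix.smul_apply, Matrix.single,
              Matrix.of_apply, hcond]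
          rw [sum_point _ _ i i hentry]
          have hii : (X + t • Matrix.single i i (1:ℝ)) i i = X i i + t := by
            simp [Matrix.single]
          rw [hii]; ring
      · refine ⟨Matrix.single i j (1:ℝ) + Matrix.single j i (1:ℝ), 2, two_pos, ?_, ?_, ?_⟩
        · refine Matrix.IsHermitian.ext fun k l => ?_
          simp only [Matrix.add_apply, Matrix.single, Matrix.of_apply, star_trivial]
          by_cases h1 : i = k <;> by_cases h2 : j = l <;> by_cases h3 : i = l <;>
            by_cases h4 : j = k <;> simp [h1, h2, h3, h4] <;> aesop
        · intro A hA
          have h5 : (A * (Matrix.single i j (1:ℝ) + Matrix.single j i (1:ℝ))).trace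
              = A j i + A i j := by
            simp [Matrix.trace, Matrix.mul_apply, Matrix.diag, Matrix.single,
              Matrix.of_apply, Matrix.add_apply, mul_add, mul_ite, ite_and,
              Finset.sum_add_distrib, Finset.sum_ite_eq]
          rw [h5, herm_apply hA i j]; ring
        · intro t
          have hentry : ∀ k l, ¬(k = i ∧ l = j) → ¬(k = j ∧ l = i) →
              |(X + t • (Matrix.single i j (1:ℝ) + Matrix.single j i (1:ℝ))) k l| = |X k l| := by
            intro k l h1 h2
            have hc1 : ¬(i = k ∧ j = l) := fun hc => h1 ⟨hc.1.symm, hc.2.symm⟩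
            have hc2 : ¬(j = k ∧ i = l) := fun hc => h2 ⟨hc.1.symm, hc.2.symm⟩
            simp [Matrix.add_apply, Matrix.smul_apply, Matrix.single,
              Matrix.of_apply, hc1, hc2]
          rw [sum_two_point _ _ i j hij hentry]
          have h1 : (X + t • (Matrix.single i j (1:ℝ) + Matrix.single j i (1:ℝ))) i j
              = X i j + t := by
            simp [Matrix.single, Matrix.add_apply, Matrix.smul_apply,
              Matrix.of_apply, hij, Ne.symm hij]
          have h2 : (X + t • (Matrix.single i j (1:ℝ) + Matrix.single j i (1:ℝ))) j i
              = X j i + t := by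
            simp [Matrix.single, Matrix.add_apply, Matrix.smul_apply,
              Matrix.of_apply, hij, Ne.symm hij]
          rw [h1, h2, herm_apply hXherm i j]
          ring
    obtain ⟨δ, hδ, hps⟩ := posdef_perturb hX hHh
    have hgc : ContinuousAt (fun t : ℝ => (X + t • H)⁻¹ i j) 0 :=
      cont_inv_entry X H hX.det_pos.ne' i j
    have hg0 : (X + (0:ℝ) • H)⁻¹ i j = X⁻¹ i j := by simp
    have key : ∀ t : ℝ, |t| < δ →
        0 ≤ t * (S i j - (X + t • H)⁻¹ i j) + lam * (|X i j + t| - |X i j|) := by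
      intro t ht
      have hY : (X + t • H).PosDef := hps t ht
      have hmin' := hmin (X + t • H) hY
      have hgrad := logdet_grad_ineq hY hX
      have hXsub : X - (X + t • H) = (-t) • H := by
        rw [sub_add_cancel_left, ← neg_smul]
      have htr1 : ((X + t • H)⁻¹ * (X - (X + t • H))).trace
          = -t * (c * (X + t • H)⁻¹ i j) := by
        rw [hXsub, Matrix.mul_smul, Matrix.trace_smul, htr _ hY.inv.isHermitian, smul_eq_mul]
      have htr2 : (S * (X + t • H)).trace = (S * X).trace + t * (c * S i j) := by
        rw [Matrix.mul_add, Matrix.trace_add, Matrix.mul_smul, Matrix.trace_smul,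
          htr S hS, smul_eq_mul]
      have hl1t := hl1 t
      have hstep : Real.log X.det - Real.log (X + t • H).det
          ≤ -t * (c * (X + t • H)⁻¹ i j) := by
        rw [← htr1]; exact hgrad
      rw [htr2, hl1t] at hmin'
      have hexp : lam * ((∑ k, ∑ l, |X k l|) + c * (|X i j + t| - |X i j|))
          = lam * (∑ k, ∑ l, |X k l|) + lam * (c * (|X i j + t| - |X i j|)) := mul_add _ _ _
      rw [hexp] at hmin'
      have h0' : 0 ≤ -t * (c * (X + t • H)⁻¹ i j) + t * (c * S i j)
          + lam * (c * (|X i j + t| - |X i j|)) := by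
        linarith [hmin', hstep]
      have h0 : 0 ≤ c * (t * (S i j - (X + t • H)⁻¹ i j)
          + lam * (|X i j + t| - |X i j|)) := by
        linarith [h0', show c * (t * (S i j - (X + t • H)⁻¹ i j)
          + lam * (|X i j + t| - |X i j|)) = -t * (c * (X + t • H)⁻¹ i j) + t * (c * S i j)
          + lam * (c * (|X i j + t| - |X i j|)) from by ring]
      exact (mul_nonneg_iff_of_pos_left hc).mp h0
    have hub : X⁻¹ i j ≤ S i j + lam := by
      rw [← hg0]
      refine right_lim_le (g := fun t : ℝ => (X + t • H)⁻¹ i j) hgc hδ fun t ht0 htδ => ?_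
      have hk := key t (by rw [abs_of_pos ht0]; exact htδ)
      have habs : |X i j + t| - |X i j| ≤ t := by
        have h := abs_add_le (X i j) t
        rw [abs_of_pos ht0] at h
        linarith
      have h3 : lam * (|X i j + t| - |X i j|) ≤ lam * t :=
        mul_le_mul_of_nonneg_left habs hlam.le
      have h2 : 0 ≤ t * (S i j - (X + t • H)⁻¹ i j + lam) := by
        have he : t * (S i j - (X + t • H)⁻¹ i j + lam)
            = t * (S i j - (X + t • H)⁻¹ i j) + lam * t := by ring
        linarith
      have h4 := (mul_nonneg_iff_of_pos_left ht0).mp h2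
      linarith
    have hlb : S i j - lam ≤ X⁻¹ i j := by
      rw [← hg0]
      refine left_lim_ge (g := fun t : ℝ => (X + t • H)⁻¹ i j) hgc hδ fun t htδ ht0 => ?_
      have hk := key t (by rw [abs_of_neg ht0]; linarith)
      have habs : |X i j + t| - |X i j| ≤ -t := by
        have h := abs_add_le (X i j) t
        rw [abs_of_neg ht0] at h
        linarith
      have h3 : lam * (|X i j + t| - |X i j|) ≤ lam * (-t) :=
        mul_le_mul_of_nonneg_left habs hlam.le
      have h2 : 0 ≤ t * (S i j - (X + t • H)⁻¹ i j - lam) := by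
        have he : t * (S i j - (X + t • H)⁻¹ i j - lam)
            = t * (S i j - (X + t • H)⁻¹ i j) + lam * (-t) := by ring
        linarith
      have h4 : S i j - (X + t • H)⁻¹ i j - lam ≤ 0 := by nlinarith
      linarith
    refine ⟨?_, ?_, ?_⟩
    · intro hpos
      have hub2 : S i j + lam ≤ X⁻¹ i j := by
        rw [← hg0]
        refine left_lim_ge (g := fun t : ℝ => (X + t • H)⁻¹ i j) hgc
          (lt_min hδ hpos) fun t htδ ht0 => ?_
        have hk := key t (by
          rw [abs_of_neg ht0]
          have h5 := min_le_left δ (X i j)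
          linarith)
        have habs : |X i j + t| = X i j + t := abs_of_pos (by
          have h5 := min_le_right δ (X i j)
          linarith)
        have habs2 : |X i j| = X i j := abs_of_pos hpos
        rw [habs, habs2] at hk
        have h2 : 0 ≤ t * (S i j - (X + t • H)⁻¹ i j + lam) := by
          have he : t * (S i j - (X + t • H)⁻¹ i j + lam)
              = t * (S i j - (X + t • H)⁻¹ i j) + lam * (X i j + t - X i j) := by ring
          linarith
        have h4 : S i j - (X + t • H)⁻¹ i j + lam ≤ 0 := by nlinarith
        linarith
      linarith
    · intro hneg
      have hlb2 : X⁻¹ i j ≤ S i j - lam := by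
        rw [← hg0]
        refine right_lim_le (g := fun t : ℝ => (X + t • H)⁻¹ i j) hgc
          (lt_min hδ (neg_pos.mpr hneg)) fun t ht0 htδ => ?_
        have hk := key t (by
          rw [abs_of_pos ht0]
          have h5 := min_le_left δ (-X i j)
          linarith)
        have habs : |X i j + t| = -(X i j + t) := abs_of_neg (by
          have h5 := min_le_right δ (-X i j)
          linarith)
        have habs2 : |X i j| = -X i j := abs_of_neg hneg
        rw [habs, habs2] at hk
        have h2 : 0 ≤ t * (S i j - (X + t • H)⁻¹ i j - lam) := by
          have he : t * (S i j - (X + t • H)⁻¹ i j - lam)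
              = t * (S i j - (X + t • H)⁻¹ i j) + lam * (-(X i j + t) - -X i j) := by ring
          linarith
        have h4 := (mul_nonneg_iff_of_pos_left ht0).mp h2
        linarith
      linarith
    · intro _
      rw [abs_le]
      constructor <;> linarith
  · -- backward direction
    intro hcond Y hY
    have hgrad := logdet_grad_ineq hX hY
    have hXherm := hX.isHermitian
    have hYherm := hY.isHermitian
    have hXinvherm : (X⁻¹).IsHermitian := hXherm.inv
    -- pointwise subgradient inequality
    have hpt : ∀ k l, 0 ≤ (S k l - X⁻¹ k l) * ((Y - X) l k)
        + lam * (|Y k l| - |X k l|) := by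
      intro k l
      have hYX : (Y - X) l k = Y k l - X k l := by
        simp only [Matrix.sub_apply]
        rw [herm_apply hYherm k l, herm_apply hXherm k l]
      rw [hYX]
      rcases lt_trichotomy (X k l) 0 with hneg | hzero | hpos
      · have h := (hcond k l).2.1 hneg
        rw [h]
        have h1 : -(Y k l) ≤ |Y k l| := neg_le_abs _
        have h2 : |X k l| = -(X k l) := abs_of_neg hneg
        nlinarith
      · have h := (hcond k l).2.2 hzero
        have h1 : -( |S k l - X⁻¹ k l| * |Y k l| ) ≤ (S k l - X⁻¹ k l) * Y k l := by
          rw [← abs_mul]; exact neg_abs_le _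
        have h2 : |S k l - X⁻¹ k l| * |Y k l| ≤ lam * |Y k l| :=
          mul_le_mul_of_nonneg_right h (abs_nonneg _)
        rw [hzero]
        simp only [sub_zero, abs_zero]
        linarith
      · have h := (hcond k l).1 hpos
        rw [h]
        have h1 : Y k l ≤ |Y k l| := le_abs_self _
        have h2 : |X k l| = X k l := abs_of_pos hpos
        nlinarith
    have hsum : 0 ≤ ∑ k, ∑ l, ((S k l - X⁻¹ k l) * ((Y - X) l k)
        + lam * (|Y k l| - |X k l|)) :=
      Finset.sum_nonneg fun k _ => Finset.sum_nonneg fun l _ => hpt k l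
    have hsplit : ∑ k, ∑ l, ((S k l - X⁻¹ k l) * ((Y - X) l k)
          + lam * (|Y k l| - |X k l|))
        = ((S - X⁻¹) * (Y - X)).trace
          + lam * ((∑ k, ∑ l, |Y k l|) - ∑ k, ∑ l, |X k l|) := by
      have e1 : ∑ k, ∑ l, ((S k l - X⁻¹ k l) * ((Y - X) l k) + lam * (|Y k l| - |X k l|))
          = (∑ k, ∑ l, (S k l - X⁻¹ k l) * ((Y - X) l k))
            + lam * ∑ k, ∑ l, (|Y k l| - |X k l|) := by
        simp [Finset.sum_add_distrib, ← Finset.mul_sum]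
      have e2 : ∑ k, ∑ l, (|Y k l| - |X k l|)
          = (∑ k, ∑ l, |Y k l|) - ∑ k, ∑ l, |X k l| := by
        simp [Finset.sum_sub_distrib]
      rw [e1, e2, trace_mul_eq]
      simp only [Matrix.sub_apply]
    have e3 : ((S - X⁻¹) * (Y - X)).trace
        = (S * Y).trace - (S * X).trace - (X⁻¹ * (Y - X)).trace := by
      simp only [Matrix.sub_mul, Matrix.mul_sub, Matrix.trace_sub]
      ring
    rw [hsplit, e3] at hsum
    have hexpY : lam * ((∑ k, ∑ l, |Y k l|) - ∑ k, ∑ l, |X k l|)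
        = lam * (∑ k, ∑ l, |Y k l|) - lam * (∑ k, ∑ l, |X k l|) := mul_sub _ _ _
    rw [hexpY] at hsum
    linarith [hgrad, hsum]
end

section
/- If the second moment matrix S has block diagonal structure S = blkdiag(C_1, ..., C_ℓ) apart from off-block entries all bounded in absolute value by less than λ, and X is block diagonal with each block solving the penalized problem restricted to that block, then X is the global solution of min_{X ≻ 0} -log det X + trace(SX) + λ‖X‖_1. -/
open Matrix Finset

lemma my_trace_eq_sum_eigenvalues {n : Type*} [Fintype n] [DecidableEq n]
    {A : Matrix n n ℝ} (hA : A.IsHermitian) :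
    A.trace = ∑ i, hA.eigenvalues i := by
  conv_lhs => rw [hA.spectral_theorem]
  rw [Unitary.conjStarAlgAut_apply]
  rw [Matrix.trace_mul_cycle]
  rw [show (star (hA.eigenvectorUnitary : Matrix n n ℝ)) * (hA.eigenvectorUnitary : Matrix n n ℝ) = 1 from
    Matrix.mem_unitaryGroup_iff'.mp (hA.eigenvectorUnitary).2]
  rw [one_mul, trace_diagonal]
  simp

lemma my_log_det_le {n : Type*} [Fintype n] [DecidableEq n]
    {A : Matrix n n ℝ} (hA : A.PosDef) :
    Real.log A.det ≤ A.trace - Fintype.card n := by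
  rw [hA.isHermitian.det_eq_prod_eigenvalues, my_trace_eq_sum_eigenvalues hA.isHermitian]
  simp only [RCLike.ofReal_real_eq_id, id]
  rw [Real.log_prod (fun i _ => (hA.eigenvalues_pos i).ne')]
  rw [show ((Fintype.card n : ℝ)) = ∑ _i : n, (1:ℝ) by simp, ← Finset.sum_sub_distrib]
  exact Finset.sum_le_sum fun i _ => by
    have := Real.log_le_sub_one_of_pos (hA.eigenvalues_pos i); linarith

lemma my_posdef_submatrix {n : Type*} [Fintype n] [DecidableEq n]
    {M : Matrix n n ℝ} (hM : M.PosDef) {m : Type*} [Fintype m]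
    (e : m → n) (he : Function.Injective e) : (M.submatrix e e).PosDef := by
  have hBM : M.submatrix e e = ((1 : Matrix n n ℝ).submatrix id e)ᴴ * M * ((1 : Matrix n n ℝ).submatrix id e) := by
    conv_lhs => rw [(show M = 1 * M * 1 by simp)]
    rw [submatrix_mul (he₂ := Function.bijective_id),
      submatrix_mul (he₂ := Function.bijective_id), submatrix_id_id,
      conjTranspose_submatrix, conjTranspose_one]
  set B := (1 : Matrix n n ℝ).submatrix id e with hB
  refine posDef_iff_dotProduct_mulVec.mpr ⟨?_, ?_⟩
  · show (M.submatrix e e)ᴴ = _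
    rw [conjTranspose_submatrix, hM.1.eq]
  · intro x hx
    have hBx : B *ᵥ x ≠ 0 := by
      obtain ⟨i₀, hi₀⟩ := Function.ne_iff.mp hx
      simp only [Pi.zero_apply] at hi₀
      intro h0
      apply hi₀
      have h1 : (B *ᵥ x) (e i₀) = x i₀ := by
        simp only [mulVec, dotProduct, hB, submatrix_apply, id_eq, one_apply]
        rw [Finset.sum_eq_single i₀]
        · simp
        · intro b _ hb
          simp only [ite_mul, one_mul, zero_mul, ite_eq_right_iff]
          exact fun h => absurd (he h.symm) hb
        · simp
      rw [h0] at h1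
      simpa using h1.symm
    have := (posDef_iff_dotProduct_mulVec.mp hM).2 hBx
    rw [hBM]
    simpa only [star_mulVec, dotProduct_mulVec, vecMul_vecMul] using this

open scoped MatrixOrder in
lemma my_log_det_le_log_det_add {n : Type*} [Fintype n] [DecidableEq n]
    {Z Y : Matrix n n ℝ} (hZ : Z.PosDef) (hY : Y.PosDef) :
    Real.log Y.det ≤ Real.log Z.det + (Z⁻¹ * Y).trace - Fintype.card n := by
  have hZi : Z⁻¹.PosDef := hZ.inv
  set R := CFC.sqrt Z⁻¹ with hR
  have hRR : R * R = Z⁻¹ := CFC.sqrt_mul_sqrt_self Z⁻¹ hZi.posSemidef.nonneg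
  have hRherm : R.IsHermitian := (Matrix.nonneg_iff_posSemidef.mp (CFC.sqrt_nonneg Z⁻¹)).1
  have hdetR : R.det * R.det = Z⁻¹.det := by rw [← det_mul, hRR]
  have hdetZi : 0 < Z⁻¹.det := hZi.det_pos
  have hRdet : R.det ≠ 0 := by
    intro h; rw [h, mul_zero] at hdetR; rw [← hdetR] at hdetZi; exact lt_irrefl _ hdetZi
  have hM : (R * Y * R).PosDef := by
    refine posDef_iff_dotProduct_mulVec.mpr ⟨?_, ?_⟩
    · show (R * Y * R)ᴴ = _
      rw [conjTranspose_mul, conjTranspose_mul, hRherm.eq, hY.1.eq, mul_assoc]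
    · intro x hx
      have hRx : R *ᵥ x ≠ 0 := by
        intro h0
        apply hx
        have hinj : Function.Injective (R.mulVec) :=
          mulVec_injective_iff_isUnit.mpr ((isUnit_iff_isUnit_det R).2 hRdet.isUnit)
        apply hinj
        rw [h0, mulVec_zero]
      have := (posDef_iff_dotProduct_mulVec.mp hY).2 hRx
      have heq : R * Y * R = Rᴴ * Y * R := by rw [hRherm.eq]
      rw [heq]
      simpa only [star_mulVec, dotProduct_mulVec, vecMul_vecMul] using this
  have hlog := my_log_det_le hM
  have hdet : (R * Y * R).det = Z⁻¹.det * Y.det := by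
    rw [det_mul, det_mul, ← hdetR]; ring
  have htrc : (R * Y * R).trace = (Z⁻¹ * Y).trace := by
    rw [trace_mul_cycle, hRR]
  rw [hdet, htrc, Real.log_mul (ne_of_gt hdetZi) (ne_of_gt hY.det_pos),
    det_nonsing_inv, Ring.inverse_eq_inv', Real.log_inv] at hlog
  linarith

section blocks

variable {p ℓ : ℕ} (c : Fin p → Fin ℓ)

lemma my_sum_fiberwise (g : Fin p → ℝ) :
    ∑ i, g i = ∑ k : Fin ℓ, ∑ i : {i // c i = k}, g i := by
  rw [← Fintype.sum_fiberwise c g]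

lemma my_sum_fiber {k : Fin ℓ} (g : Fin p → ℝ) (hg : ∀ m, c m ≠ k → g m = 0) :
    ∑ i, g i = ∑ i : {i // c i = k}, g i := by
  rw [my_sum_fiberwise c g]
  rw [Fintype.sum_eq_single k]
  intro k' hk'
  exact Finset.sum_eq_zero fun i _ => hg i.val (i.2.trans_ne hk')

lemma my_sum_blocks (f : Fin p → Fin p → ℝ) (hf : ∀ i j, c i ≠ c j → f i j = 0) :
    ∑ i, ∑ j, f i j
      = ∑ k : Fin ℓ, ∑ i : {i // c i = k}, ∑ j : {i // c i = k}, f i j := by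
  rw [my_sum_fiberwise c (fun i => ∑ j, f i j)]
  refine Finset.sum_congr rfl fun k _ => Finset.sum_congr rfl fun i _ => ?_
  exact my_sum_fiber c (fun j => f i j) fun m hm => hf i m (by rw [i.2]; exact Ne.symm hm)

lemma my_trace_mul_double {n : Type*} [Fintype n] (A B : Matrix n n ℝ) :
    (A * B).trace = ∑ i, ∑ j, A i j * B j i := by
  simp [Matrix.trace, Matrix.diag, Matrix.mul_apply]

lemma my_quad_form {n : Type*} [Fintype n] (M : Matrix n n ℝ) (x : n → ℝ) :
    star x ⬝ᵥ M *ᵥ x = ∑ i, ∑ j, x i * M i j * x j := by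
  simp [dotProduct, mulVec, Finset.mul_sum, mul_assoc]

lemma my_posdef_of_blocks (M : Matrix (Fin p) (Fin p) ℝ) (hHerm : M.IsHermitian)
    (hblk : ∀ i j, c i ≠ c j → M i j = 0)
    (h : ∀ k, (M.submatrix (Subtype.val : {i // c i = k} → Fin p) Subtype.val).PosDef) :
    M.PosDef := by
  refine posDef_iff_dotProduct_mulVec.mpr ⟨hHerm, fun x hx => ?_⟩
  rw [my_quad_form, my_sum_blocks c _ (fun i j hij => by simp [hblk i j hij])]
  have hterm : ∀ k, (0:ℝ) ≤ ∑ i : {i // c i = k}, ∑ j : {i // c i = k}, x i * M i j * x j := by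
    intro k
    have h2 := (h k).posSemidef.dotProduct_mulVec_nonneg (fun i : {i // c i = k} => x i.val)
    rwa [my_quad_form] at h2
  obtain ⟨i₀, hi₀⟩ := Function.ne_iff.mp hx
  rw [Pi.zero_apply] at hi₀
  have hpos : 0 < ∑ i : {i // c i = c i₀}, ∑ j : {i // c i = c i₀}, x i * M i j * x j := by
    have h2 := (posDef_iff_dotProduct_mulVec.mp (h (c i₀))).2 (x := fun i : {i // c i = c i₀} => x i.val) ?_
    · rwa [my_quad_form] at h2
    · intro h0
      apply hi₀
      have := congrFun h0 ⟨i₀, rfl⟩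
      simpa using this
  exact Finset.sum_pos' (fun k _ => hterm k) ⟨c i₀, Finset.mem_univ _, hpos⟩

end blocks

theorem block_diagonal_global_solution (p ℓ : ℕ) (c : Fin p → Fin ℓ)
    (S : Matrix (Fin p) (Fin p) ℝ) (hS : S.IsHermitian) (lam : ℝ) (hlam : 0 < lam)
    (hoff : ∀ i j, c i ≠ c j → |S i j| < lam)
    (X : Matrix (Fin p) (Fin p) ℝ) (hXsym : X.IsHermitian)
    (hXblk : ∀ i j, c i ≠ c j → X i j = 0)
    (hblkopt : ∀ k : Fin ℓ,
      (X.submatrix (Subtype.val : {i // c i = k} → Fin p) Subtype.val).PosDef ∧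
      ∀ Y : Matrix {i // c i = k} {i // c i = k} ℝ, Y.PosDef →
        -Real.log (X.submatrix (Subtype.val : {i // c i = k} → Fin p) Subtype.val).det
            + ((S.submatrix (Subtype.val : {i // c i = k} → Fin p) Subtype.val) *
                (X.submatrix (Subtype.val : {i // c i = k} → Fin p) Subtype.val)).trace
            + lam * ∑ i : {i // c i = k}, ∑ j : {i // c i = k},
                |X.submatrix (Subtype.val : {i // c i = k} → Fin p) Subtype.val i j| ≤
          -Real.log Y.det
            + ((S.submatrix (Subtype.val : {i // c i = k} → Fin p) Subtype.val) * Y).trace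
            + lam * ∑ i : {i // c i = k}, ∑ j : {i // c i = k}, |Y i j|) :
    X.PosDef ∧
    ∀ Y : Matrix (Fin p) (Fin p) ℝ, Y.PosDef →
      -Real.log X.det + (S * X).trace + lam * ∑ i, ∑ j, |X i j| ≤
        -Real.log Y.det + (S * Y).trace + lam * ∑ i, ∑ j, |Y i j| := by
  classical
  have hXpos : X.PosDef := my_posdef_of_blocks c X hXsym hXblk (fun k => (hblkopt k).1)
  refine ⟨hXpos, fun Y hY => ?_⟩
  set subS : ∀ k : Fin ℓ, Matrix {i // c i = k} {i // c i = k} ℝ :=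
    fun k => S.submatrix Subtype.val Subtype.val with hsubS
  set subX : ∀ k : Fin ℓ, Matrix {i // c i = k} {i // c i = k} ℝ :=
    fun k => X.submatrix Subtype.val Subtype.val with hsubX
  set subY : ∀ k : Fin ℓ, Matrix {i // c i = k} {i // c i = k} ℝ :=
    fun k => Y.submatrix Subtype.val Subtype.val with hsubY
  have hsubYpos : ∀ k, (subY k).PosDef :=
    fun k => my_posdef_submatrix hY _ Subtype.val_injective
  have hYsymm : ∀ i j, Y j i = Y i j := by
    intro i j
    have := congrFun (congrFun hY.1 j) i
    simpa [conjTranspose_apply] using this.symm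
  -- determinant of X decomposes
  have hdetX : X.det = ∏ k, (subX k).det := by
    have htri : X.BlockTriangular c := fun i j hlt => hXblk i j hlt.ne'
    rw [htri.det_fintype]
    rfl
  -- the block-diagonal restriction of Y
  set Z : Matrix (Fin p) (Fin p) ℝ :=
    Matrix.of (fun i j => if c i = c j then Y i j else 0) with hZ
  have hZapp : ∀ i j, Z i j = if c i = c j then Y i j else 0 := fun _ _ => rfl
  have hZblk : ∀ i j, c i ≠ c j → Z i j = 0 := fun i j h => if_neg h
  have hsubZ : ∀ k, Z.submatrix (Subtype.val : {i // c i = k} → Fin p) Subtype.val = subY k := by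
    intro k
    ext i j
    simp only [submatrix_apply, hZapp, hsubY]
    rw [if_pos (i.2.trans j.2.symm)]
  have hZherm : Z.IsHermitian := by
    ext i j
    simp only [conjTranspose_apply, hZapp, star_trivial]
    by_cases h : c i = c j
    · rw [if_pos h.symm, if_pos h, hYsymm]
    · rw [if_neg (fun hh => h hh.symm), if_neg h]
  have hZpos : Z.PosDef := by
    refine my_posdef_of_blocks c Z hZherm hZblk (fun k => ?_)
    rw [hsubZ k]; exact hsubYpos k
  have hdetZ : Z.det = ∏ k, (subY k).det := by
    have htri : Z.BlockTriangular c := fun i j hlt => hZblk i j hlt.ne'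
    rw [htri.det_fintype]
    exact Finset.prod_congr rfl fun k _ => by rw [show Z.toSquareBlock c k =
      Z.submatrix (Subtype.val : {i // c i = k} → Fin p) Subtype.val from rfl, hsubZ k]
  -- inverse of Z is block diagonal: explicit left inverse
  set W : Matrix (Fin p) (Fin p) ℝ :=
    Matrix.of (fun i j => if h : c i = c j then (subY (c i))⁻¹ ⟨i, rfl⟩ ⟨j, h.symm⟩ else 0) with hW
  have hWapp : ∀ i j, W i j = if h : c i = c j then (subY (c i))⁻¹ ⟨i, rfl⟩ ⟨j, h.symm⟩ else 0 :=
    fun _ _ => rfl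
  have hWZ : W * Z = 1 := by
    ext i j
    rw [mul_apply]
    by_cases hc : c i = c j
    · have hgz : ∀ m, c m ≠ c i → W i m * Z m j = 0 := by
        intro m hm
        rw [hWapp, dif_neg (fun h => hm h.symm), zero_mul]
      rw [my_sum_fiber c (fun m => W i m * Z m j) hgz]
      have hterm : ∀ m : {m // c m = c i}, W i m.val * Z m.val j
          = (subY (c i))⁻¹ ⟨i, rfl⟩ m * (subY (c i)) m ⟨j, hc.symm⟩ := by
        intro m
        have h1 : c i = c m.val := m.2.symm
        rw [hWapp, dif_pos h1, hZapp, if_pos (m.2.trans hc)]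
        congr 1
      rw [Finset.sum_congr rfl (fun m _ => hterm m), ← mul_apply,
        nonsing_inv_mul _ (hsubYpos (c i)).det_pos.ne'.isUnit]
      by_cases hij : i = j
      · subst hij
        simp [one_apply]
      · rw [one_apply_ne, one_apply_ne hij]
        simp [Subtype.ext_iff, hij]
    · have hall : ∀ m ∈ Finset.univ, W i m * Z m j = 0 := by
        intro m _
        by_cases hm : c i = c m
        · rw [hZapp, if_neg (fun h => hc (hm.trans h)), mul_zero]
        · rw [hWapp, dif_neg hm, zero_mul]
      rw [Finset.sum_eq_zero hall]
      exact (one_apply_ne (fun h : i = j => hc (by rw [h]))).symm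
  have hZinv : Z⁻¹ = W := inv_eq_left_inv hWZ
  have htrZY : (Z⁻¹ * Y).trace = (p : ℝ) := by
    have h1 : (Z⁻¹ * Y).trace = (Z⁻¹ * Z).trace := by
      rw [hZinv, my_trace_mul_double, my_trace_mul_double]
      refine Finset.sum_congr rfl fun i _ => Finset.sum_congr rfl fun j _ => ?_
      by_cases hc : c i = c j
      · rw [hZapp, if_pos hc.symm]
      · rw [hWapp, dif_neg hc, zero_mul, zero_mul]
    rw [h1, nonsing_inv_mul _ hZpos.det_pos.ne'.isUnit, trace_one]
    simp
  have hF : Real.log Y.det ≤ Real.log Z.det := by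
    have := my_log_det_le_log_det_add hZpos hY
    rw [htrZY] at this
    simp only [Fintype.card_fin] at this
    linarith
  -- objective of X equals sum of block objectives
  have htrX : (S * X).trace = ∑ k, ((subS k) * (subX k)).trace := by
    rw [my_trace_mul_double,
      my_sum_blocks c (fun i j => S i j * X j i)
        (fun i j h => by simp [hXblk j i (Ne.symm h)])]
    exact Finset.sum_congr rfl fun k _ => by
      rw [my_trace_mul_double]
      rfl
  have habsX : (∑ i, ∑ j, |X i j|)
      = ∑ k, ∑ i : {i // c i = k}, ∑ j : {i // c i = k}, |(subX k) i j| := by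
    rw [my_sum_blocks c (fun i j => |X i j|) (fun i j h => by simp [hXblk i j h])]
    rfl
  have objX : -Real.log X.det + (S * X).trace + lam * ∑ i, ∑ j, |X i j|
      = ∑ k, (-Real.log (subX k).det + ((subS k) * (subX k)).trace
          + lam * ∑ i : {i // c i = k}, ∑ j : {i // c i = k}, |(subX k) i j|) := by
    rw [hdetX, Real.log_prod (fun k _ => (hblkopt k).1.det_pos.ne'), htrX, habsX,
      Finset.mul_sum, Finset.sum_add_distrib, Finset.sum_add_distrib, ← Finset.sum_neg_distrib]
  -- block optimality
  have hstep2 : ∑ k, (-Real.log (subX k).det + ((subS k) * (subX k)).trace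
          + lam * ∑ i : {i // c i = k}, ∑ j : {i // c i = k}, |(subX k) i j|)
      ≤ ∑ k, (-Real.log (subY k).det + ((subS k) * (subY k)).trace
          + lam * ∑ i : {i // c i = k}, ∑ j : {i // c i = k}, |(subY k) i j|) :=
    Finset.sum_le_sum fun k _ => (hblkopt k).2 (subY k) (hsubYpos k)
  -- sum of block objectives of Y is at most global objective of Y
  have hblocksum : ∑ k, (((subS k) * (subY k)).trace
          + lam * ∑ i : {i // c i = k}, ∑ j : {i // c i = k}, |(subY k) i j|)
      = ∑ i, ∑ j, (if c i = c j then S i j * Y j i + lam * |Y i j| else 0) := by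
    rw [my_sum_blocks c _ (fun i j h => if_neg h)]
    refine Finset.sum_congr rfl fun k _ => ?_
    rw [my_trace_mul_double, Finset.mul_sum]
    simp only [Finset.mul_sum, ← Finset.sum_add_distrib]
    refine Finset.sum_congr rfl fun i _ => Finset.sum_congr rfl fun j _ => ?_
    rw [if_pos (i.2.trans j.2.symm)]
    rfl
  have hglobY : (S * Y).trace + lam * ∑ i, ∑ j, |Y i j|
      = ∑ i, ∑ j, (S i j * Y j i + lam * |Y i j|) := by
    rw [my_trace_mul_double, Finset.mul_sum]
    simp only [Finset.mul_sum, ← Finset.sum_add_distrib]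
  have htl : ∑ k, (((subS k) * (subY k)).trace
          + lam * ∑ i : {i // c i = k}, ∑ j : {i // c i = k}, |(subY k) i j|)
      ≤ (S * Y).trace + lam * ∑ i, ∑ j, |Y i j| := by
    rw [hblocksum, hglobY]
    refine Finset.sum_le_sum fun i _ => Finset.sum_le_sum fun j _ => ?_
    by_cases hc : c i = c j
    · rw [if_pos hc]
    · rw [if_neg hc]
      have h1 : |S i j| ≤ lam := (hoff i j hc).le
      have h2 : -|S i j * Y j i| ≤ S i j * Y j i := neg_abs_le _
      have h3 : |S i j * Y j i| = |S i j| * |Y j i| := abs_mul _ _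
      have h4 : |S i j| * |Y j i| ≤ lam * |Y j i| :=
        mul_le_mul_of_nonneg_right h1 (abs_nonneg _)
      have h5 : |Y j i| = |Y i j| := by rw [hYsymm]
      nlinarith [abs_nonneg (Y i j)]
  have hstep3 : ∑ k, (-Real.log (subY k).det + ((subS k) * (subY k)).trace
          + lam * ∑ i : {i // c i = k}, ∑ j : {i // c i = k}, |(subY k) i j|)
      ≤ -Real.log Y.det + (S * Y).trace + lam * ∑ i, ∑ j, |Y i j| := by
    have hsplit : ∑ k, (-Real.log (subY k).det + ((subS k) * (subY k)).trace
          + lam * ∑ i : {i // c i = k}, ∑ j : {i // c i = k}, |(subY k) i j|)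
        = -Real.log Z.det + ∑ k, (((subS k) * (subY k)).trace
          + lam * ∑ i : {i // c i = k}, ∑ j : {i // c i = k}, |(subY k) i j|) := by
      rw [hdetZ, Real.log_prod (fun k _ => (hsubYpos k).det_pos.ne'),
        ← Finset.sum_neg_distrib, ← Finset.sum_add_distrib]
      exact Finset.sum_congr rfl fun k _ => by ring
    rw [hsplit]
    have := add_le_add (neg_le_neg hF) htl
    linarith
  rw [objX]
  calc ∑ k, (-Real.log (subX k).det + ((subS k) * (subX k)).trace
          + lam * ∑ i : {i // c i = k}, ∑ j : {i // c i = k}, |(subX k) i j|)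
      ≤ ∑ k, (-Real.log (subY k).det + ((subS k) * (subY k)).trace
          + lam * ∑ i : {i // c i = k}, ∑ j : {i // c i = k}, |(subY k) i j|) := hstep2
    _ ≤ -Real.log Y.det + (S * Y).trace + lam * ∑ i, ∑ j, |Y i j| := hstep3
end
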